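/- Let G be a graph with nonnegative vertex weights of total weight W, let w ≥ W/2, and let (H, η) be an extended strip decomposition of G whose every particle has weight at most w. Then either G admits a rigid extended strip decomposition whose every particle has weight at most w, or there exists a set X ⊆ V(G) with |X| ≤ 2 such that every connected component of G − N[X] has weight at most w. -/

import Mathlib

/-- Closed neighborhood of a set `S` in a graph `G`. -/
def closedNbhd {V : Type*} (G : SimpleGraph V) (S : Set V) : Set V :=
  S ∪ {v | ∃ s ∈ S, G.Adj s v}

/-- Open neighborhood of a set `S` in a graph `G`. -/
def openNbhd {V : Type*} (G : SimpleGraph V) (S : Set V) : Set V :=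
  {v | v ∉ S ∧ ∃ s ∈ S, G.Adj s v}

/-- Reachability inside the induced subgraph of `G` on the vertex set `T`. -/
def ReachIn {V : Type*} (G : SimpleGraph V) (T : Set V) : V → V → Prop :=
  Relation.ReflTransGen (fun a b => G.Adj a b ∧ a ∈ T ∧ b ∈ T)

/-- Total weight of a vertex set. -/
noncomputable def wsum {V : Type*} [Fintype V] (w : V → ℕ) (S : Set V) : ℕ :=
  ∑ v ∈ S.toFinite.toFinset, w v

/-- `l` is the vertex sequence of an induced path of `G`:
nonempty, no repetitions, and two vertices of `l` are adjacent in `G`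
iff they are consecutive in `l`. -/
def IsInducedPathList {V : Type*} (G : SimpleGraph V) (l : List V) : Prop :=
  l ≠ [] ∧ l.Nodup ∧
  ∀ (i j : ℕ) (hi : i < l.length) (hj : j < l.length),
    G.Adj (l.get ⟨i, hi⟩) (l.get ⟨j, hj⟩) ↔ (i + 1 = j ∨ j + 1 = i)

/-- Every connected component of the induced subgraph of `G` on `T`
has `w`-weight at most `b`. -/
def CompsSmall {V : Type*} [Fintype V] (G : SimpleGraph V) (w : V → ℕ)
    (T : Set V) (b : ℕ) : Prop :=
  ∀ v ∈ T, wsum w {u | ReachIn G T v u} ≤ b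

/-- `x`, `y`, `z` form a triangle in `H`. -/
def Tri {H' : Type*} (H : SimpleGraph H') (x y z : H') : Prop :=
  H.Adj x y ∧ H.Adj y z ∧ H.Adj x z

/-- An extended strip decomposition `(H, η)` of a graph `G`.
`ηv x` is `η(x)`, `ηe x y` is `η(xy)`, `ηi x y` is the interface `η(xy, x)`,
and `ηt x y z` is `η(xyz)`. -/
structure ESD {V : Type*} {H' : Type*} (G : SimpleGraph V) (H : SimpleGraph H') where
  ηv : H' → Set V
  ηe : H' → H' → Set V
  ηi : H' → H' → Set V
  ηt : H' → H' → H' → Set V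
  ηe_symm : ∀ x y, ηe x y = ηe y x
  ηt_symm12 : ∀ x y z, ηt x y z = ηt y x z
  ηt_symm23 : ∀ x y z, ηt x y z = ηt x z y
  ηe_empty : ∀ x y, ¬ H.Adj x y → ηe x y = ∅
  ηt_empty : ∀ x y z, ¬ Tri H x y z → ηt x y z = ∅
  ηi_sub : ∀ x y, ηi x y ⊆ ηe x y
  cover : ∀ v : V, (∃ x, v ∈ ηv x) ∨ (∃ x y, v ∈ ηe x y) ∨ (∃ x y z, v ∈ ηt x y z)
  disj_vv : ∀ x y, x ≠ y → ηv x ∩ ηv y = ∅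
  disj_ve : ∀ x y z, ηv x ∩ ηe y z = ∅
  disj_vt : ∀ x a b c, ηv x ∩ ηt a b c = ∅
  disj_ee : ∀ x y a b, ¬ (x = a ∧ y = b) → ¬ (x = b ∧ y = a) → ηe x y ∩ ηe a b = ∅
  disj_et : ∀ x y a b c, ηe x y ∩ ηt a b c = ∅
  disj_tt : ∀ a b c d e f, ({a, b, c} : Set H') ≠ ({d, e, f} : Set H') →
    ηt a b c ∩ ηt d e f = ∅
  complete : ∀ x y z, H.Adj x y → H.Adj x z → y ≠ z →
    ∀ u ∈ ηi x y, ∀ v ∈ ηi x z, G.Adj u v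
  edge_cond : ∀ u v : V, G.Adj u v →
    (∃ x, u ∈ ηv x ∧ v ∈ ηv x) ∨
    (∃ x y, u ∈ ηe x y ∧ v ∈ ηe x y) ∨
    (∃ x y z, u ∈ ηt x y z ∧ v ∈ ηt x y z) ∨
    (∃ x y z, H.Adj x y ∧ H.Adj x z ∧ y ≠ z ∧
      ((u ∈ ηi x y ∧ v ∈ ηi x z) ∨ (v ∈ ηi x y ∧ u ∈ ηi x z))) ∨
    (∃ x y, H.Adj x y ∧ ((u ∈ ηi x y ∧ v ∈ ηv x) ∨ (v ∈ ηi x y ∧ u ∈ ηv x))) ∨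
    (∃ x y z, Tri H x y z ∧
      ((u ∈ ηt x y z ∧ v ∈ ηi x y ∩ ηi y x) ∨ (v ∈ ηt x y z ∧ u ∈ ηi x y ∩ ηi y x)))

namespace ESD

variable {V : Type*} {H' : Type*} {G : SimpleGraph V} {H : SimpleGraph H'}

/-- A rigid extended strip decomposition: every edge of `H` has nonempty interfaces
and every isolated vertex `x` of `H` has `η(x) ≠ ∅`. -/
def IsRigid (D : ESD G H) : Prop :=
  (∀ x y, H.Adj x y → (D.ηi x y).Nonempty) ∧
  (∀ x, (∀ y, ¬ H.Adj x y) → (D.ηv x).Nonempty)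

/-- A vertex `z` of `G` is peripheral in `(H, η)`. -/
def Peripheral (D : ESD G H) (z : V) : Prop :=
  ∃ x y, H.Adj x y ∧ (∀ u, H.Adj x u → u = y) ∧ D.ηi x y = {z} ∧ D.ηv x = ∅

/-- The full edge particle `A_{pq}^{pq}`. -/
def fullEdge (D : ESD G H) (p q : H') : Set V :=
  D.ηv p ∪ D.ηv q ∪ D.ηe p q ∪ {v | ∃ r, v ∈ D.ηt p q r}

/-- Every particle of `D` has `w`-weight at most `b`. -/
def ParticlesSmall [Fintype V] (D : ESD G H) (w : V → ℕ) (b : ℕ) : Prop :=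
  (∀ x, wsum w (D.ηv x) ≤ b) ∧
  (∀ x y, H.Adj x y → wsum w (D.ηe x y \ (D.ηi x y ∪ D.ηi y x)) ≤ b) ∧
  (∀ x y, H.Adj x y → wsum w (D.ηv x ∪ (D.ηe x y \ D.ηi y x)) ≤ b) ∧
  (∀ x y, H.Adj x y → wsum w (D.fullEdge x y) ≤ b) ∧
  (∀ x y z, Tri H x y z → wsum w (D.ηt x y z) ≤ b)

end ESD

/-- The subdivided claw `S_{t,t,t}`: a center vertex and three arms of length `t`. -/
def StttRel (t : ℕ) : (Unit ⊕ Fin 3 × Fin t) → (Unit ⊕ Fin 3 × Fin t) → Prop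
  | Sum.inl _, Sum.inr p => p.2.val = 0
  | Sum.inr p, Sum.inr q => p.1 = q.1 ∧ p.2.val + 1 = q.2.val
  | _, _ => False

def Sttt (t : ℕ) : SimpleGraph (Unit ⊕ Fin 3 × Fin t) :=
  SimpleGraph.fromRel (StttRel t)

/-! ### Infrastructure -/

open Classical in
lemma wsum_mono {V : Type*} [Fintype V] (w : V → ℕ) {S T : Set V} (h : S ⊆ T) :
    wsum w S ≤ wsum w T := by
  classical
  apply Finset.sum_le_sum_of_subset
  intro v hv
  simp only [Set.Finite.mem_toFinset] at hv ⊢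
  exact h hv

lemma wsum_union_of_disjoint {V : Type*} [Fintype V] (w : V → ℕ) {S T : Set V}
    (h : Disjoint S T) : wsum w (S ∪ T) = wsum w S + wsum w T := by
  classical
  unfold wsum
  rw [← Finset.sum_union]
  · apply Finset.sum_congr ?_ (fun _ _ => rfl)
    ext v
    simp only [Set.Finite.mem_toFinset, Finset.mem_union, Set.mem_union]
  · rw [Finset.disjoint_left]
    intro a ha hb
    simp only [Set.Finite.mem_toFinset] at ha hb
    exact Set.disjoint_left.mp h ha hb

lemma wsum_add_compl_le {V : Type*} [Fintype V] (w : V → ℕ) (S : Set V) :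
    wsum w S + wsum w Sᶜ ≤ wsum w Set.univ := by
  rw [← wsum_union_of_disjoint w disjoint_compl_right]
  exact wsum_mono w (by simp)

lemma reachIn_subset {V : Type*} (G : SimpleGraph V) (T S : Set V)
    (hcl : ∀ a c, G.Adj a c → a ∈ S → a ∈ T → c ∈ T → c ∈ S) {v : V} (hv : v ∈ S) :
    {u | ReachIn G T v u} ⊆ S := by
  intro u hu
  simp only [Set.mem_setOf_eq, ReachIn] at hu
  induction hu with
  | refl => exact hv
  | tail _ h ih => exact hcl _ _ h.1 ih h.2.1 h.2.2

/-- The key machine to establish `CompsSmall`: a family `R` of "sealed regions",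
each of weight at most `b`, each closed under edges avoiding `N[X]`; everything
outside the union of the regions also of weight at most `b`. -/
lemma comps_small_of_regions {V : Type*} [Fintype V] (G : SimpleGraph V) (w : V → ℕ) (b : ℕ)
    (X : Set V) (R : Set (Set V))
    (hb : ∀ S ∈ R, wsum w S ≤ b)
    (hcl : ∀ S ∈ R, ∀ a c, G.Adj a c → a ∈ S → a ∉ closedNbhd G X → c ∉ closedNbhd G X → c ∈ S)
    (hworld : wsum w ((⋃₀ R)ᶜ) ≤ b) :
    CompsSmall G w (Set.univ \ closedNbhd G X) b := by
  intro v hv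
  by_cases hvR : ∃ S ∈ R, v ∈ S
  · obtain ⟨S, hS, hvS⟩ := hvR
    refine le_trans (wsum_mono w ?_) (hb S hS)
    exact reachIn_subset G _ S
      (fun a c hadj ha haT hcT => hcl S hS a c hadj ha haT.2 hcT.2) hvS
  · refine le_trans (wsum_mono w ?_) hworld
    refine reachIn_subset G _ ((⋃₀ R)ᶜ) ?_ ?_
    · intro a c hadj ha haT hcT
      intro hc
      obtain ⟨S, hS, hcS⟩ := hc
      exact ha ⟨S, hS, hcl S hS c a hadj.symm hcS hcT.2 haT.2⟩
    · intro hc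
      obtain ⟨S, hS, hvS⟩ := hc
      exact hvR ⟨S, hS, hvS⟩

namespace ESD

variable {V : Type*} {H' : Type*} {G : SimpleGraph V} {H : SimpleGraph H'} (D : ESD G H)

lemma eq_of_mem_ηv {u : V} {x y : H'} (hx : u ∈ D.ηv x) (hy : u ∈ D.ηv y) : x = y := by
  by_contra h
  have := D.disj_vv x y h
  rw [Set.eq_empty_iff_forall_notMem] at this
  exact this u ⟨hx, hy⟩

lemma not_mem_ηv_ηe {u : V} {x a c : H'} (hx : u ∈ D.ηv x) (he : u ∈ D.ηe a c) : False := by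
  have := D.disj_ve x a c
  rw [Set.eq_empty_iff_forall_notMem] at this
  exact this u ⟨hx, he⟩

lemma not_mem_ηv_ηt {u : V} {x a c d : H'} (hx : u ∈ D.ηv x) (ht : u ∈ D.ηt a c d) : False := by
  have := D.disj_vt x a c d
  rw [Set.eq_empty_iff_forall_notMem] at this
  exact this u ⟨hx, ht⟩

lemma not_mem_ηe_ηt {u : V} {x y a c d : H'} (he : u ∈ D.ηe x y) (ht : u ∈ D.ηt a c d) :
    False := by
  have := D.disj_et x y a c d
  rw [Set.eq_empty_iff_forall_notMem] at this
  exact this u ⟨he, ht⟩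

lemma pair_eq_of_mem_ηe {u : V} {x y a c : H'} (h1 : u ∈ D.ηe x y) (h2 : u ∈ D.ηe a c) :
    (x = a ∧ y = c) ∨ (x = c ∧ y = a) := by
  by_contra h
  push_neg at h
  have := D.disj_ee x y a c (fun hh => (h.1 hh.1) hh.2) (fun hh => (h.2 hh.1) hh.2)
  rw [Set.eq_empty_iff_forall_notMem] at this
  exact this u ⟨h1, h2⟩

lemma triple_eq_of_mem_ηt {u : V} {x y z a c d : H'} (h1 : u ∈ D.ηt x y z)
    (h2 : u ∈ D.ηt a c d) : ({x, y, z} : Set H') = {a, c, d} := by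
  by_contra h
  have := D.disj_tt x y z a c d h
  rw [Set.eq_empty_iff_forall_notMem] at this
  exact this u ⟨h1, h2⟩

lemma adj_of_mem_ηe {u : V} {x y : H'} (h : u ∈ D.ηe x y) : H.Adj x y := by
  by_contra hadj
  rw [D.ηe_empty x y hadj] at h
  exact h

lemma tri_of_mem_ηt {u : V} {x y z : H'} (h : u ∈ D.ηt x y z) : Tri H x y z := by
  by_contra htri
  rw [D.ηt_empty x y z htri] at h
  exact h

lemma ηt_rot (x y z : H') : D.ηt x y z = D.ηt y z x := by
  rw [D.ηt_symm12, D.ηt_symm23]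

lemma mem_ηe_of_ηi {u : V} {x y : H'} (h : u ∈ D.ηi x y) : u ∈ D.ηe x y := D.ηi_sub x y h

lemma adj_of_mem_ηi {u : V} {x y : H'} (h : u ∈ D.ηi x y) : H.Adj x y :=
  D.adj_of_mem_ηe (D.mem_ηe_of_ηi h)

/-- Permutation elimination for unordered triples of distinct elements. -/
lemma triple_perm {x y z a c d : H'} (h : ({x, y, z} : Set H') = {a, c, d})
    (hxy : x ≠ y) (hyz : y ≠ z) (hxz : x ≠ z) :
    (a = x ∧ c = y ∧ d = z) ∨ (a = x ∧ c = z ∧ d = y) ∨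
    (a = y ∧ c = x ∧ d = z) ∨ (a = y ∧ c = z ∧ d = x) ∨
    (a = z ∧ c = x ∧ d = y) ∨ (a = z ∧ c = y ∧ d = x) := by
  have hmem : ∀ t : H', t ∈ ({x, y, z} : Set H') ↔ t ∈ ({a, c, d} : Set H') := fun t => by
    rw [h]
  have ha : a = x ∨ a = y ∨ a = z := by
    have := (hmem a).mpr (by simp)
    simpa using this
  have hc : c = x ∨ c = y ∨ c = z := by
    have := (hmem c).mpr (by simp)
    simpa using this
  have hd : d = x ∨ d = y ∨ d = z := by
    have := (hmem d).mpr (by simp)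
    simpa using this
  have hx' : x = a ∨ x = c ∨ x = d := by
    have := (hmem x).mp (by simp)
    simpa using this
  have hy' : y = a ∨ y = c ∨ y = d := by
    have := (hmem y).mp (by simp)
    simpa using this
  have hz' : z = a ∨ z = c ∨ z = d := by
    have := (hmem z).mp (by simp)
    simpa using this
  rcases ha with h1 | h1 | h1 <;> rcases hc with h2 | h2 | h2 <;>
    rcases hd with h3 | h3 | h3 <;> subst h1 <;> subst h2 <;> subst h3 <;>
    simp_all <;> tauto

lemma ηt_eq_of_triple_eq {x y z a c d : H'} (h : ({x, y, z} : Set H') = {a, c, d})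
    (hxy : x ≠ y) (hyz : y ≠ z) (hxz : x ≠ z) :
    D.ηt a c d = D.ηt x y z := by
  rcases triple_perm h hxy hyz hxz with
    ⟨h1, h2, h3⟩ | ⟨h1, h2, h3⟩ | ⟨h1, h2, h3⟩ | ⟨h1, h2, h3⟩ | ⟨h1, h2, h3⟩ | ⟨h1, h2, h3⟩ <;>
    subst h1 <;> subst h2 <;> subst h3 <;>
    first
      | rfl
      | (rw [D.ηt_symm23]; done)
      | (rw [D.ηt_symm12]; done)
      | (rw [D.ηt_rot]; done)
      | (rw [D.ηt_rot, D.ηt_rot]; done)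
      | (rw [D.ηt_symm12, D.ηt_symm23, D.ηt_symm12]; done)
      | (rw [D.ηt_symm23, D.ηt_symm12]; done)
      | (rw [D.ηt_symm12, D.ηt_symm23]; done)

end ESD


/-! ### Cleaning: kept/dead edges and assignment of displaced sets -/

namespace ESD

variable {V : Type*} {H' : Type*} {G : SimpleGraph V} {H : SimpleGraph H'} (D : ESD G H)

/-- An edge of `H` is kept if both of its interfaces are nonempty. -/
def kept (x y : H') : Prop := H.Adj x y ∧ (D.ηi x y).Nonempty ∧ (D.ηi y x).Nonempty

/-- A dead edge: an edge of `H` with some empty interface. -/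
def deadE (x y : H') : Prop := H.Adj x y ∧ ¬ D.kept x y

lemma kept.adj {x y : H'} (h : D.kept x y) : H.Adj x y := h.1

lemma kept_symm {x y : H'} (h : D.kept x y) : D.kept y x := ⟨h.1.symm, h.2.2, h.2.1⟩

lemma deadE_symm {x y : H'} (h : D.deadE x y) : D.deadE y x :=
  ⟨h.1.symm, fun hk => h.2 (D.kept_symm hk)⟩

lemma kept_or_dead {x y : H'} (h : H.Adj x y) : D.kept x y ∨ D.deadE x y := by
  by_cases hk : D.kept x y
  · exact Or.inl hk
  · exact Or.inr ⟨h, hk⟩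

lemma not_kept_of_dead {x y : H'} (h : D.deadE x y) : ¬ D.kept x y := h.2

lemma kept_irrefl (x : H') : ¬ D.kept x x := fun h => H.loopless.irrefl x h.1

open scoped Classical in
/-- Canonical choice of an element of a nonempty set. -/
noncomputable def pickSet (S : Set H') (d : H') : H' :=
  if h : S.Nonempty then h.choose else d

lemma pickSet_eq {S : Set H'} (h : S.Nonempty) (d : H') : pickSet S d = h.choose := by
  rw [pickSet, dif_pos h]

lemma pickSet_mem {S : Set H'} (h : S.Nonempty) (d : H') : pickSet S d ∈ S := by
  rw [pickSet_eq h d]; exact h.choose_spec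

lemma pickSet_congr {S S' : Set H'} (h : S = S') (hS : S.Nonempty) (d d' : H') :
    pickSet S d = pickSet S' d' := by
  subst h
  rw [pickSet_eq hS d, pickSet_eq hS d']

open scoped Classical in
/-- The vertex of `H` to which the set of a dead edge is assigned. -/
noncomputable def targetE (x y : H') : H' :=
  if (D.ηi x y).Nonempty then x else if (D.ηi y x).Nonempty then y else pickSet {x, y} x

lemma targetE_symm {x y : H'} (h : D.deadE x y) : D.targetE x y = D.targetE y x := by
  unfold targetE
  by_cases h1 : (D.ηi x y).Nonempty <;> by_cases h2 : (D.ηi y x).Nonempty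
  · exact absurd ⟨h.1, h1, h2⟩ h.2
  · simp [h1, h2]
  · simp [h1, h2]
  · simp only [h1, h2, if_false]
    exact pickSet_congr (Set.pair_comm x y) ⟨x, by simp⟩ x y

lemma targetE_mem (x y : H') : D.targetE x y = x ∨ D.targetE x y = y := by
  unfold targetE
  by_cases h1 : (D.ηi x y).Nonempty <;> by_cases h2 : (D.ηi y x).Nonempty <;>
    simp [h1, h2]
  have := pickSet_mem (⟨x, by simp⟩ : ({x, y} : Set H').Nonempty) x
  simpa using this

lemma targetE_of_alive {x y : H'} (h : (D.ηi x y).Nonempty) : D.targetE x y = x := by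
  unfold targetE; simp [h]

/-- Sets of dead edges assigned to `t`. -/
def DEx (t : H') : Set V :=
  {v | ∃ x y, D.deadE x y ∧ D.targetE x y = t ∧ v ∈ D.ηe x y}

/-- Assignment of the set of a triangle having at least one dead edge. -/
def AssignedT (x y z t : H') : Prop :=
  Tri H x y z ∧ (
    (D.kept x y ∧ D.kept x z ∧ D.deadE y z ∧ t = x) ∨
    (D.kept x y ∧ D.kept y z ∧ D.deadE x z ∧ t = y) ∨
    (D.kept x z ∧ D.kept y z ∧ D.deadE x y ∧ t = z) ∨
    (D.kept x y ∧ D.deadE x z ∧ D.deadE y z ∧ t = pickSet {x, y} x) ∨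
    (D.kept x z ∧ D.deadE x y ∧ D.deadE y z ∧ t = pickSet {x, z} x) ∨
    (D.kept y z ∧ D.deadE x y ∧ D.deadE x z ∧ t = pickSet {y, z} y) ∨
    (D.deadE x y ∧ D.deadE x z ∧ D.deadE y z ∧ t = pickSet {x, y, z} x))

/-- Sets of dead triangles assigned to `t`. -/
def DTx (t : H') : Set V :=
  {v | ∃ x y z, D.AssignedT x y z t ∧ v ∈ D.ηt x y z}

/-- The new vertex set of `t` after the one-shot cleaning. -/
def vstar (t : H') : Set V := D.ηv t ∪ D.DEx t ∪ D.DTx t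

lemma AssignedT_swap12 {x y z t : H'} (h : D.AssignedT x y z t) : D.AssignedT y x z t := by
  obtain ⟨⟨a1, a2, a3⟩, hc⟩ := h
  refine ⟨⟨a1.symm, a3, a2⟩, ?_⟩
  have p2 : pickSet ({x, y} : Set H') x = pickSet ({y, x} : Set H') y :=
    pickSet_congr (Set.pair_comm x y) ⟨x, by simp⟩ x y
  have p3 : pickSet ({x, y, z} : Set H') x = pickSet ({y, x, z} : Set H') y :=
    pickSet_congr (Set.insert_comm x y {z}) ⟨x, by simp⟩ x y
  rcases hc with ⟨h1, h2, h3, h4⟩ | ⟨h1, h2, h3, h4⟩ | ⟨h1, h2, h3, h4⟩ | ⟨h1, h2, h3, h4⟩ |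
    ⟨h1, h2, h3, h4⟩ | ⟨h1, h2, h3, h4⟩ | ⟨h1, h2, h3, h4⟩
  · exact Or.inr (Or.inl ⟨D.kept_symm h1, h2, h3, h4⟩)
  · exact Or.inl ⟨D.kept_symm h1, h2, h3, h4⟩
  · exact Or.inr (Or.inr (Or.inl ⟨h2, h1, D.deadE_symm h3, h4⟩))
  · exact Or.inr (Or.inr (Or.inr (Or.inl ⟨D.kept_symm h1, h3, h2, by rw [h4, p2]⟩)))
  · exact Or.inr (Or.inr (Or.inr (Or.inr (Or.inr (Or.inl ⟨h1, D.deadE_symm h2, h3, h4⟩)))))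
  · exact Or.inr (Or.inr (Or.inr (Or.inr (Or.inl ⟨h1, D.deadE_symm h2, h3, h4⟩))))
  · exact Or.inr (Or.inr (Or.inr (Or.inr (Or.inr (Or.inr
      ⟨D.deadE_symm h1, h3, h2, by rw [h4, p3]⟩)))))

lemma AssignedT_swap23 {x y z t : H'} (h : D.AssignedT x y z t) : D.AssignedT x z y t := by
  obtain ⟨⟨a1, a2, a3⟩, hc⟩ := h
  refine ⟨⟨a3, a2.symm, a1⟩, ?_⟩
  have p2 : pickSet ({y, z} : Set H') y = pickSet ({z, y} : Set H') z :=
    pickSet_congr (Set.pair_comm y z) ⟨y, by simp⟩ y z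
  have p3 : pickSet ({x, y, z} : Set H') x = pickSet ({x, z, y} : Set H') x :=
    pickSet_congr (by rw [Set.pair_comm y z]) ⟨x, by simp⟩ x x
  rcases hc with ⟨h1, h2, h3, h4⟩ | ⟨h1, h2, h3, h4⟩ | ⟨h1, h2, h3, h4⟩ | ⟨h1, h2, h3, h4⟩ |
    ⟨h1, h2, h3, h4⟩ | ⟨h1, h2, h3, h4⟩ | ⟨h1, h2, h3, h4⟩
  · exact Or.inl ⟨h2, h1, D.deadE_symm h3, h4⟩
  · exact Or.inr (Or.inr (Or.inl ⟨h1, D.kept_symm h2, h3, h4⟩))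
  · exact Or.inr (Or.inl ⟨h1, D.kept_symm h2, h3, h4⟩)
  · exact Or.inr (Or.inr (Or.inr (Or.inr (Or.inl ⟨h1, h2, D.deadE_symm h3, h4⟩))))
  · exact Or.inr (Or.inr (Or.inr (Or.inl ⟨h1, h2, D.deadE_symm h3, h4⟩)))
  · exact Or.inr (Or.inr (Or.inr (Or.inr (Or.inr (Or.inl
      ⟨D.kept_symm h1, h3, h2, by rw [h4, p2]⟩)))))
  · exact Or.inr (Or.inr (Or.inr (Or.inr (Or.inr (Or.inr
      ⟨h2, h1, D.deadE_symm h3, by rw [h4, p3]⟩)))))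

lemma AssignedT_unique {x y z t t' : H'} (h : D.AssignedT x y z t)
    (h' : D.AssignedT x y z t') : t = t' := by
  obtain ⟨_, hc⟩ := h
  obtain ⟨_, hc'⟩ := h'
  have ex : ∀ a b : H', D.kept a b → D.deadE a b → False := fun a b hk hd => hd.2 hk
  rcases hc with ⟨h1, h2, h3, h4⟩ | ⟨h1, h2, h3, h4⟩ | ⟨h1, h2, h3, h4⟩ | ⟨h1, h2, h3, h4⟩ |
    ⟨h1, h2, h3, h4⟩ | ⟨h1, h2, h3, h4⟩ | ⟨h1, h2, h3, h4⟩ <;>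
  rcases hc' with ⟨g1, g2, g3, g4⟩ | ⟨g1, g2, g3, g4⟩ | ⟨g1, g2, g3, g4⟩ | ⟨g1, g2, g3, g4⟩ |
    ⟨g1, g2, g3, g4⟩ | ⟨g1, g2, g3, g4⟩ | ⟨g1, g2, g3, g4⟩ <;>
    first
      | (rw [h4, g4]; done)
      | (exfalso
         first
          | exact ex _ _ h1 g1 | exact ex _ _ h1 g2 | exact ex _ _ h1 g3
          | exact ex _ _ h2 g1 | exact ex _ _ h2 g2 | exact ex _ _ h2 g3
          | exact ex _ _ h3 g1 | exact ex _ _ h3 g2 | exact ex _ _ h3 g3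
          | exact ex _ _ g1 h1 | exact ex _ _ g1 h2 | exact ex _ _ g1 h3
          | exact ex _ _ g2 h1 | exact ex _ _ g2 h2 | exact ex _ _ g2 h3
          | exact ex _ _ g3 h1 | exact ex _ _ g3 h2 | exact ex _ _ g3 h3)

end ESD


namespace ESD

variable {V : Type*} {H' : Type*} {G : SimpleGraph V} {H : SimpleGraph H'} (D : ESD G H)

lemma tri_ne' {H' : Type*} {H : SimpleGraph H'} {x y z : H'} (h : Tri H x y z) :
    x ≠ y ∧ y ≠ z ∧ x ≠ z :=
  ⟨h.1.ne, h.2.1.ne, h.2.2.ne⟩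

lemma AssignedT_congr {x y z a c d t : H'} (h : D.AssignedT x y z t)
    (he : ({x, y, z} : Set H') = {a, c, d}) : D.AssignedT a c d t := by
  obtain ⟨hne1, hne2, hne3⟩ := tri_ne' h.1
  rcases triple_perm he hne1 hne2 hne3 with
    ⟨h1, h2, h3⟩ | ⟨h1, h2, h3⟩ | ⟨h1, h2, h3⟩ | ⟨h1, h2, h3⟩ | ⟨h1, h2, h3⟩ | ⟨h1, h2, h3⟩ <;>
    subst h1 <;> subst h2 <;> subst h3
  · exact h
  · exact D.AssignedT_swap23 h
  · exact D.AssignedT_swap12 h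
  · exact D.AssignedT_swap23 (D.AssignedT_swap12 h)
  · exact D.AssignedT_swap12 (D.AssignedT_swap23 h)
  · exact D.AssignedT_swap23 (D.AssignedT_swap12 (D.AssignedT_swap23 h))

lemma AssignedT_has_dead {x y z t : H'} (h : D.AssignedT x y z t) :
    D.deadE x y ∨ D.deadE x z ∨ D.deadE y z := by
  rcases h.2 with ⟨_, _, h3, _⟩ | ⟨_, _, h3, _⟩ | ⟨_, _, h3, _⟩ | ⟨_, h2, _, _⟩ |
    ⟨_, h2, _, _⟩ | ⟨_, h2, _, _⟩ | ⟨h1, _, _, _⟩ <;> tauto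

lemma eq_of_mem_DEx {v : V} {t t' : H'} (h : v ∈ D.DEx t) (h' : v ∈ D.DEx t') : t = t' := by
  obtain ⟨x, y, hd, ht, hv⟩ := h
  obtain ⟨x', y', hd', ht', hv'⟩ := h'
  rcases D.pair_eq_of_mem_ηe hv hv' with ⟨e1, e2⟩ | ⟨e1, e2⟩
  · subst e1; subst e2; rw [← ht, ← ht']
  · subst e1; subst e2
    rw [← ht, ← ht', D.targetE_symm hd]

lemma eq_of_mem_DTx {v : V} {t t' : H'} (h : v ∈ D.DTx t) (h' : v ∈ D.DTx t') : t = t' := by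
  obtain ⟨x, y, z, ha, hv⟩ := h
  obtain ⟨x', y', z', ha', hv'⟩ := h'
  have he := D.triple_eq_of_mem_ηt hv hv'
  exact D.AssignedT_unique (D.AssignedT_congr ha he) ha'

lemma not_mem_DEx_ηv {v : V} {t x : H'} (h : v ∈ D.DEx t) (h' : v ∈ D.ηv x) : False := by
  obtain ⟨_, _, _, _, hv⟩ := h
  exact D.not_mem_ηv_ηe h' hv

lemma not_mem_DTx_ηv {v : V} {t x : H'} (h : v ∈ D.DTx t) (h' : v ∈ D.ηv x) : False := by
  obtain ⟨_, _, _, _, hv⟩ := h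
  exact D.not_mem_ηv_ηt h' hv

lemma not_mem_DEx_DTx {v : V} {t t' : H'} (h : v ∈ D.DEx t) (h' : v ∈ D.DTx t') : False := by
  obtain ⟨_, _, _, _, hv⟩ := h
  obtain ⟨_, _, _, _, hv'⟩ := h'
  exact D.not_mem_ηe_ηt hv hv'

lemma eq_of_mem_vstar {v : V} {t t' : H'} (h : v ∈ D.vstar t) (h' : v ∈ D.vstar t') :
    t = t' := by
  rcases h with (h | h) | h <;> rcases h' with (h' | h') | h'
  · exact D.eq_of_mem_ηv h h'
  · exact absurd h' (fun hh => D.not_mem_DEx_ηv hh h)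
  · exact absurd h' (fun hh => D.not_mem_DTx_ηv hh h)
  · exact absurd h (fun hh => D.not_mem_DEx_ηv hh h')
  · exact D.eq_of_mem_DEx h h'
  · exact absurd h' (fun hh => D.not_mem_DEx_DTx h hh)
  · exact absurd h (fun hh => D.not_mem_DTx_ηv hh h')
  · exact absurd h' (fun hh => D.not_mem_DEx_DTx hh h)
  · exact D.eq_of_mem_DTx h h'

lemma not_mem_DEx_of_kept {v : V} {t x y : H'} (h : v ∈ D.DEx t) (hv : v ∈ D.ηe x y)
    (hk : D.kept x y) : False := by
  obtain ⟨a, c, hd, _, hv'⟩ := h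
  rcases D.pair_eq_of_mem_ηe hv' hv with ⟨e1, e2⟩ | ⟨e1, e2⟩
  · subst e1; subst e2; exact hd.2 hk
  · subst e1; subst e2; exact hd.2 (D.kept_symm hk)

lemma not_mem_DTx_of_keptTri {v : V} {t x y z : H'} (h : v ∈ D.DTx t) (hv : v ∈ D.ηt x y z)
    (k1 : D.kept x y) (k2 : D.kept x z) (k3 : D.kept y z) : False := by
  obtain ⟨a, c, d, ha, hv'⟩ := h
  have he := D.triple_eq_of_mem_ηt hv' hv
  have := D.AssignedT_congr ha he
  rcases D.AssignedT_has_dead this with hd | hd | hd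
  · exact hd.2 k1
  · exact hd.2 k2
  · exact hd.2 k3

/-! ### Sealed-region closure lemmas -/

variable {NX : Set V}

/-- The set of a dead edge whose interfaces are covered is sealed. -/
lemma sealed_deadE (x y : H') (hIx : D.ηi x y ⊆ NX) (hIy : D.ηi y x ⊆ NX) :
    ∀ a c, G.Adj a c → a ∈ D.ηe x y → a ∉ NX → c ∉ NX → c ∈ D.ηe x y := by
  intro a c hadj ha haN hcN
  have hIa : ∀ s t' : H', a ∈ D.ηi s t' → False := by
    intro s t' hst
    rcases D.pair_eq_of_mem_ηe (D.mem_ηe_of_ηi hst) ha with ⟨e1, e2⟩ | ⟨e1, e2⟩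
    · subst e1; subst e2; exact haN (hIx hst)
    · subst e1; subst e2; exact haN (hIy hst)
  rcases D.edge_cond a c hadj with ⟨s, hs1, _⟩ | ⟨s, t', h1, h2⟩ | ⟨s, t', r, h1, _⟩ |
    ⟨s, t', r, _, _, _, hc⟩ | ⟨s, t', _, hc⟩ | ⟨s, t', r, _, hc⟩
  · exact absurd ha (fun hh => D.not_mem_ηv_ηe hs1 hh)
  · rcases D.pair_eq_of_mem_ηe h1 ha with ⟨e1, e2⟩ | ⟨e1, e2⟩
    · subst e1; subst e2; exact h2
    · subst e1; subst e2; rw [D.ηe_symm]; exact h2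
  · exact absurd h1 (fun hh => D.not_mem_ηe_ηt ha hh)
  · rcases hc with ⟨h1, _⟩ | ⟨_, h2⟩
    · exact absurd h1 (hIa _ _)
    · exact absurd h2 (hIa _ _)
  · rcases hc with ⟨h1, _⟩ | ⟨_, h2⟩
    · exact absurd h1 (hIa _ _)
    · exact absurd ha (fun hh => D.not_mem_ηv_ηe h2 hh)
  · rcases hc with ⟨h1, _⟩ | ⟨_, h2⟩
    · exact absurd h1 (fun hh => D.not_mem_ηe_ηt ha hh)
    · exact absurd h2.1 (hIa _ _)

/-- The set of a triangle whose three cores are covered is sealed. -/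
lemma sealed_tri (x y z : H')
    (hc1 : D.ηi x y ∩ D.ηi y x ⊆ NX) (hc2 : D.ηi x z ∩ D.ηi z x ⊆ NX)
    (hc3 : D.ηi y z ∩ D.ηi z y ⊆ NX) :
    ∀ a c, G.Adj a c → a ∈ D.ηt x y z → a ∉ NX → c ∉ NX → c ∈ D.ηt x y z := by
  intro a c hadj ha haN hcN
  have htri := D.tri_of_mem_ηt ha
  obtain ⟨hne1, hne2, hne3⟩ := tri_ne' htri
  rcases D.edge_cond a c hadj with ⟨s, hs1, _⟩ | ⟨s, t', h1, _⟩ | ⟨s, t', r, h1, h2⟩ |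
    ⟨s, t', r, _, _, _, hc⟩ | ⟨s, t', _, hc⟩ | ⟨s, t', r, htri', hc⟩
  · exact absurd hs1 (fun hh => D.not_mem_ηv_ηt hh ha)
  · exact absurd h1 (fun hh => D.not_mem_ηe_ηt hh ha)
  · have he := D.triple_eq_of_mem_ηt ha h1
    rw [D.ηt_eq_of_triple_eq he hne1 hne2 hne3] at h2
    exact h2
  · rcases hc with ⟨h1, _⟩ | ⟨_, h2⟩
    · exact absurd (D.mem_ηe_of_ηi h1) (fun hh => D.not_mem_ηe_ηt hh ha)
    · exact absurd (D.mem_ηe_of_ηi h2) (fun hh => D.not_mem_ηe_ηt hh ha)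
  · rcases hc with ⟨h1, _⟩ | ⟨_, h2⟩
    · exact absurd (D.mem_ηe_of_ηi h1) (fun hh => D.not_mem_ηe_ηt hh ha)
    · exact absurd h2 (fun hh => D.not_mem_ηv_ηt hh ha)
  · rcases hc with ⟨h1, h2⟩ | ⟨_, h2⟩
    · -- `a` in a triangle set, `c` in a core of that triangle
      have he := D.triple_eq_of_mem_ηt ha h1
      exfalso
      apply hcN
      rcases triple_perm he hne1 hne2 hne3 with
        ⟨e1, e2, e3⟩ | ⟨e1, e2, e3⟩ | ⟨e1, e2, e3⟩ | ⟨e1, e2, e3⟩ | ⟨e1, e2, e3⟩ |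
        ⟨e1, e2, e3⟩ <;> subst e1 <;> subst e2 <;> subst e3
      · exact hc1 h2
      · exact hc2 h2
      · exact hc1 (by rw [Set.inter_comm]; exact h2)
      · exact hc3 h2
      · exact hc2 (by rw [Set.inter_comm]; exact h2)
      · exact hc3 (by rw [Set.inter_comm]; exact h2)
    · exact absurd (D.mem_ηe_of_ηi h2.1) (fun hh => D.not_mem_ηe_ηt hh ha)

/-- A vertex set all of whose interfaces are covered is sealed. -/
lemma sealed_ηv (x : H') (hcov : ∀ d, H.Adj x d → D.ηi x d ⊆ NX) :
    ∀ a c, G.Adj a c → a ∈ D.ηv x → a ∉ NX → c ∉ NX → c ∈ D.ηv x := by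
  intro a c hadj ha haN hcN
  rcases D.edge_cond a c hadj with ⟨s, hs1, hs2⟩ | ⟨s, t', h1, _⟩ | ⟨s, t', r, h1, _⟩ |
    ⟨s, t', r, _, _, _, hc⟩ | ⟨s, t', hadj', hc⟩ | ⟨s, t', r, _, hc⟩
  · rw [D.eq_of_mem_ηv hs1 ha] at hs2; exact hs2
  · exact absurd h1 (fun hh => D.not_mem_ηv_ηe ha hh)
  · exact absurd h1 (fun hh => D.not_mem_ηv_ηt ha hh)
  · rcases hc with ⟨h1, _⟩ | ⟨_, h2⟩
    · exact absurd (D.mem_ηe_of_ηi h1) (fun hh => D.not_mem_ηv_ηe ha hh)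
    · exact absurd (D.mem_ηe_of_ηi h2) (fun hh => D.not_mem_ηv_ηe ha hh)
  · rcases hc with ⟨h1, _⟩ | ⟨h1, h2⟩
    · exact absurd (D.mem_ηe_of_ηi h1) (fun hh => D.not_mem_ηv_ηe ha hh)
    · rw [D.eq_of_mem_ηv h2 ha] at h1 hadj'
      exact absurd (hcov _ hadj' h1) hcN
  · rcases hc with ⟨h1, _⟩ | ⟨_, h2⟩
    · exact absurd h1 (fun hh => D.not_mem_ηv_ηt ha hh)
    · exact absurd (D.mem_ηe_of_ηi h2.1) (fun hh => D.not_mem_ηv_ηe ha hh)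

end ESD


namespace ESD

variable {V : Type*} {H' : Type*} {G : SimpleGraph V} {H : SimpleGraph H'} (D : ESD G H)
variable {NX : Set V}

lemma mem_fullEdge_vl {u : V} {p q : H'} (h : u ∈ D.ηv p) : u ∈ D.fullEdge p q :=
  Or.inl (Or.inl (Or.inl h))

lemma mem_fullEdge_vr {u : V} {p q : H'} (h : u ∈ D.ηv q) : u ∈ D.fullEdge p q :=
  Or.inl (Or.inl (Or.inr h))

lemma mem_fullEdge_e {u : V} {p q : H'} (h : u ∈ D.ηe p q) : u ∈ D.fullEdge p q :=
  Or.inl (Or.inr h)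

lemma mem_fullEdge_t {u : V} {p q r : H'} (h : u ∈ D.ηt p q r) : u ∈ D.fullEdge p q :=
  Or.inr ⟨r, h⟩

lemma fullEdge_symm (p q : H') : D.fullEdge p q = D.fullEdge q p := by
  ext v
  constructor <;> rintro (((h | h) | h) | ⟨r, h⟩)
  · exact D.mem_fullEdge_vr h
  · exact D.mem_fullEdge_vl h
  · exact D.mem_fullEdge_e (by rwa [D.ηe_symm])
  · exact D.mem_fullEdge_t (by rwa [D.ηt_symm12])
  · exact D.mem_fullEdge_vr h
  · exact D.mem_fullEdge_vl h
  · exact D.mem_fullEdge_e (by rwa [D.ηe_symm])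
  · exact D.mem_fullEdge_t (by rwa [D.ηt_symm12])

lemma sealed_fe_v (z w' : H')
    (hcovz : ∀ d, H.Adj z d → d ≠ w' → D.ηi z d ⊆ NX) :
    ∀ a c, G.Adj a c → a ∈ D.ηv z → a ∉ NX → c ∉ NX → c ∈ D.fullEdge z w' := by
  intro a c hadj hav haN hcN
  rcases D.edge_cond a c hadj with ⟨s, hs1, hs2⟩ | ⟨s, t', h1, _⟩ | ⟨s, t', r', h1, _⟩ |
    ⟨s, t', r', _, _, _, hc⟩ | ⟨s, t', hadj', hc⟩ | ⟨s, t', r', _, hc⟩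
  · rw [D.eq_of_mem_ηv hs1 hav] at hs2
    exact D.mem_fullEdge_vl hs2
  · exact absurd h1 (fun hh => D.not_mem_ηv_ηe hav hh)
  · exact absurd h1 (fun hh => D.not_mem_ηv_ηt hav hh)
  · rcases hc with ⟨h1, _⟩ | ⟨_, h2⟩
    · exact absurd (D.mem_ηe_of_ηi h1) (fun hh => D.not_mem_ηv_ηe hav hh)
    · exact absurd (D.mem_ηe_of_ηi h2) (fun hh => D.not_mem_ηv_ηe hav hh)
  · rcases hc with ⟨h1, _⟩ | ⟨h1, h2⟩
    · exact absurd (D.mem_ηe_of_ηi h1) (fun hh => D.not_mem_ηv_ηe hav hh)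
    · rw [D.eq_of_mem_ηv h2 hav] at h1 hadj'
      by_cases ht' : t' = w'
      · subst ht'
        exact D.mem_fullEdge_e (D.mem_ηe_of_ηi h1)
      · exact absurd (hcovz t' hadj' ht' h1) hcN
  · rcases hc with ⟨h1, _⟩ | ⟨_, h2⟩
    · exact absurd h1 (fun hh => D.not_mem_ηv_ηt hav hh)
    · exact absurd (D.mem_ηe_of_ηi h2.1) (fun hh => D.not_mem_ηv_ηe hav hh)

lemma sealed_fe_e (z w' : H')
    (hcovz : ∀ d, H.Adj z d → d ≠ w' → D.ηi z d ⊆ NX)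
    (hcovw : ∀ d, H.Adj w' d → d ≠ z → D.ηi w' d ⊆ NX) :
    ∀ a c, G.Adj a c → a ∈ D.ηe z w' → a ∉ NX → c ∉ NX → c ∈ D.fullEdge z w' := by
  intro a c hadj hae haN hcN
  rcases D.edge_cond a c hadj with ⟨s, hs1, _⟩ | ⟨s, t', h1, h2⟩ | ⟨s, t', r', h1, _⟩ |
    ⟨s, t', r', hst, hsr, hne, hc⟩ | ⟨s, t', hadj', hc⟩ | ⟨s, t', r', _, hc⟩
  · exact absurd hae (fun hh => D.not_mem_ηv_ηe hs1 hh)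
  · rcases D.pair_eq_of_mem_ηe h1 hae with ⟨e1, e2⟩ | ⟨e1, e2⟩
    · subst e1; subst e2; exact D.mem_fullEdge_e h2
    · subst e1; subst e2; exact D.mem_fullEdge_e (by rwa [D.ηe_symm])
  · exact absurd h1 (fun hh => D.not_mem_ηe_ηt hae hh)
  · rcases hc with ⟨h1, h2⟩ | ⟨h1, h2⟩
    · rcases D.pair_eq_of_mem_ηe (D.mem_ηe_of_ηi h1) hae with ⟨e1, e2⟩ | ⟨e1, e2⟩
      · subst e1; subst e2
        exact absurd (hcovz r' hsr (fun hh => hne (hh ▸ rfl)) h2) hcN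
      · subst e1; subst e2
        exact absurd (hcovw r' hsr (fun hh => hne (hh ▸ rfl)) h2) hcN
    · rcases D.pair_eq_of_mem_ηe (D.mem_ηe_of_ηi h2) hae with ⟨e1, e2⟩ | ⟨e1, e2⟩
      · subst e1; subst e2
        exact absurd (hcovz t' hst (fun hh => hne ((hh ▸ rfl : t' = r').symm ▸ rfl)) h1) hcN
      · subst e1; subst e2
        exact absurd (hcovw t' hst (fun hh => hne ((hh ▸ rfl : t' = r').symm ▸ rfl)) h1) hcN
  · rcases hc with ⟨h1, h2⟩ | ⟨_, h2⟩
    · rcases D.pair_eq_of_mem_ηe (D.mem_ηe_of_ηi h1) hae with ⟨e1, e2⟩ | ⟨e1, e2⟩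
      · subst e1; exact D.mem_fullEdge_vl h2
      · subst e1; exact D.mem_fullEdge_vr h2
    · exact absurd hae (fun hh => D.not_mem_ηv_ηe h2 hh)
  · rcases hc with ⟨h1, _⟩ | ⟨h1, h2⟩
    · exact absurd h1 (fun hh => D.not_mem_ηe_ηt hae hh)
    · rcases D.pair_eq_of_mem_ηe (D.mem_ηe_of_ηi h2.1) hae with ⟨e1, e2⟩ | ⟨e1, e2⟩
      · subst e1; subst e2; exact D.mem_fullEdge_t h1
      · subst e1; subst e2; exact D.mem_fullEdge_t (by rwa [D.ηt_symm12])

lemma sealed_fe_t (z w' r : H')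
    (hcovz : ∀ d, H.Adj z d → d ≠ w' → D.ηi z d ⊆ NX)
    (hcovw : ∀ d, H.Adj w' d → d ≠ z → D.ηi w' d ⊆ NX) :
    ∀ a c, G.Adj a c → a ∈ D.ηt z w' r → a ∉ NX → c ∉ NX → c ∈ D.fullEdge z w' := by
  intro a c hadj hat haN hcN
  have htri := D.tri_of_mem_ηt hat
  obtain ⟨hne1, hne2, hne3⟩ := tri_ne' htri
  rcases D.edge_cond a c hadj with ⟨s, hs1, _⟩ | ⟨s, t', h1, _⟩ | ⟨s, t', r', h1, h2⟩ |
    ⟨s, t', r', _, _, _, hc⟩ | ⟨s, t', _, hc⟩ | ⟨s, t', r', _, hc⟩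
  · exact absurd hs1 (fun hh => D.not_mem_ηv_ηt hh hat)
  · exact absurd h1 (fun hh => D.not_mem_ηe_ηt hh hat)
  · have he := D.triple_eq_of_mem_ηt hat h1
    rw [D.ηt_eq_of_triple_eq he hne1 hne2 hne3] at h2
    exact D.mem_fullEdge_t h2
  · rcases hc with ⟨h1, _⟩ | ⟨_, h2⟩
    · exact absurd (D.mem_ηe_of_ηi h1) (fun hh => D.not_mem_ηe_ηt hh hat)
    · exact absurd (D.mem_ηe_of_ηi h2) (fun hh => D.not_mem_ηe_ηt hh hat)
  · rcases hc with ⟨h1, _⟩ | ⟨_, h2⟩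
    · exact absurd (D.mem_ηe_of_ηi h1) (fun hh => D.not_mem_ηe_ηt hh hat)
    · exact absurd h2 (fun hh => D.not_mem_ηv_ηt hh hat)
  · rcases hc with ⟨h1, h2⟩ | ⟨_, h2⟩
    · have he := D.triple_eq_of_mem_ηt hat h1
      rcases triple_perm he hne1 hne2 hne3 with
        ⟨e1, e2, e3⟩ | ⟨e1, e2, e3⟩ | ⟨e1, e2, e3⟩ | ⟨e1, e2, e3⟩ | ⟨e1, e2, e3⟩ |
        ⟨e1, e2, e3⟩ <;> rw [e1, e2] at h2
      · exact D.mem_fullEdge_e (D.mem_ηe_of_ηi h2.1)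
      · exact absurd (hcovz r htri.2.2 hne2.symm h2.1) hcN
      · exact D.mem_fullEdge_e (by rw [D.ηe_symm]; exact D.mem_ηe_of_ηi h2.1)
      · exact absurd (hcovw r htri.2.1 hne3.symm h2.1) hcN
      · exact absurd (hcovz r htri.2.2 hne2.symm h2.2) hcN
      · exact absurd (hcovw r htri.2.1 hne3.symm h2.2) hcN
    · exact absurd (D.mem_ηe_of_ηi h2.1) (fun hh => D.not_mem_ηe_ηt hh hat)

/-- The full edge region of a kept edge, with both its ends otherwise covered,
is sealed. -/
lemma sealed_fullEdge (z w' : H')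
    (hcovz : ∀ d, H.Adj z d → d ≠ w' → D.ηi z d ⊆ NX)
    (hcovw : ∀ d, H.Adj w' d → d ≠ z → D.ηi w' d ⊆ NX) :
    ∀ a c, G.Adj a c → a ∈ D.fullEdge z w' → a ∉ NX → c ∉ NX → c ∈ D.fullEdge z w' := by
  intro a c hadj ha haN hcN
  rcases ha with ((hav | hav) | hae) | ⟨r, hat⟩
  · exact D.sealed_fe_v z w' hcovz a c hadj hav haN hcN
  · rw [D.fullEdge_symm]
    exact D.sealed_fe_v w' z hcovw a c hadj hav haN hcN
  · exact D.sealed_fe_e z w' hcovz hcovw a c hadj hae haN hcN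
  · exact D.sealed_fe_t z w' r hcovz hcovw a c hadj hat haN hcN

end ESD


namespace ESD

variable {V : Type*} {H' : Type*} {G : SimpleGraph V} {H : SimpleGraph H'} (D : ESD G H)
variable {NX : Set V}

lemma AssignedT_mem {x y z t : H'} (h : D.AssignedT x y z t) : t ∈ ({x, y, z} : Set H') := by
  rcases h.2 with ⟨_, _, _, h4⟩ | ⟨_, _, _, h4⟩ | ⟨_, _, _, h4⟩ | ⟨_, _, _, h4⟩ |
    ⟨_, _, _, h4⟩ | ⟨_, _, _, h4⟩ | ⟨_, _, _, h4⟩ <;> subst h4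
  · simp
  · simp
  · simp
  · have h := pickSet_mem (⟨x, by simp⟩ : ({x, y} : Set H').Nonempty) x
    simp only [Set.mem_insert_iff, Set.mem_singleton_iff] at h ⊢
    tauto
  · have h := pickSet_mem (⟨x, by simp⟩ : ({x, z} : Set H').Nonempty) x
    simp only [Set.mem_insert_iff, Set.mem_singleton_iff] at h ⊢
    tauto
  · have h := pickSet_mem (⟨y, by simp⟩ : ({y, z} : Set H').Nonempty) y
    simp only [Set.mem_insert_iff, Set.mem_singleton_iff] at h ⊢
    tauto
  · have h := pickSet_mem (⟨x, by simp⟩ : ({x, y, z} : Set H').Nonempty) x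
    simp only [Set.mem_insert_iff, Set.mem_singleton_iff] at h ⊢
    tauto

lemma dead_core {x y : H'} (hd : D.deadE x y) : D.ηi x y ∩ D.ηi y x = ∅ := by
  by_cases h1 : (D.ηi x y).Nonempty
  · by_cases h2 : (D.ηi y x).Nonempty
    · exact absurd ⟨hd.1, h1, h2⟩ hd.2
    · rw [Set.not_nonempty_iff_eq_empty] at h2
      rw [h2, Set.inter_empty]
  · rw [Set.not_nonempty_iff_eq_empty] at h1
    rw [h1, Set.empty_inter]

lemma dead_side_empty {x y : H'} (hd : D.deadE x y) (h1 : (D.ηi x y).Nonempty) :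
    D.ηi y x = ∅ := by
  by_cases h2 : (D.ηi y x).Nonempty
  · exact absurd ⟨hd.1, h1, h2⟩ hd.2
  · rwa [Set.not_nonempty_iff_eq_empty] at h2

/-- Interfaces of a dead edge assigned to `t` are covered, provided the relevant
direction at `t` is not the exceptional one. -/
lemma deadE_interfaces_covered {x y t exc : H'} (hd : D.deadE x y) (ht : D.targetE x y = t)
    (hcov : ∀ d, H.Adj t d → d ≠ exc → D.ηi t d ⊆ NX)
    (hxe : x ≠ exc) (hye : y ≠ exc) :
    D.ηi x y ⊆ NX ∧ D.ηi y x ⊆ NX := by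
  by_cases h1 : (D.ηi x y).Nonempty
  · have hempty := D.dead_side_empty hd h1
    have htx : t = x := by rw [← ht, D.targetE_of_alive h1]
    subst htx
    exact ⟨hcov y hd.1 hye, by rw [hempty]; exact Set.empty_subset _⟩
  · rw [Set.not_nonempty_iff_eq_empty] at h1
    by_cases h2 : (D.ηi y x).Nonempty
    · have hty : t = y := by
        rw [← ht]
        rw [D.targetE_symm hd, D.targetE_of_alive h2]
      subst hty
      exact ⟨by rw [h1]; exact Set.empty_subset _, hcov x hd.1.symm hxe⟩
    · rw [Set.not_nonempty_iff_eq_empty] at h2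
      rw [h1, h2]
      exact ⟨Set.empty_subset _, Set.empty_subset _⟩

/-- The three cores of an assigned dead triangle are covered, provided no kept
edge at the target leads to the exceptional direction. -/
lemma cores_covered {x y z t exc : H'} (ha : D.AssignedT x y z t)
    (hcov : ∀ d, H.Adj t d → d ≠ exc → D.ηi t d ⊆ NX)
    (hexc : ∀ d, d ∈ ({x, y, z} : Set H') → D.kept t d → d ≠ exc) :
    (D.ηi x y ∩ D.ηi y x ⊆ NX) ∧ (D.ηi x z ∩ D.ηi z x ⊆ NX) ∧
    (D.ηi y z ∩ D.ηi z y ⊆ NX) := by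
  have hkcov : ∀ a c : H', c ∈ ({x, y, z} : Set H') → D.kept a c → a = t →
      D.ηi a c ∩ D.ηi c a ⊆ NX := by
    intro a c hcm hk hat
    subst hat
    refine Set.Subset.trans Set.inter_subset_left (hcov c hk.1 (hexc c hcm hk))
  have hkcov' : ∀ a c : H', a ∈ ({x, y, z} : Set H') → D.kept a c → c = t →
      D.ηi a c ∩ D.ηi c a ⊆ NX := by
    intro a c ham hk hct
    subst hct
    refine Set.Subset.trans Set.inter_subset_right
      (hcov a hk.1.symm (hexc a ham (D.kept_symm hk)))
  have hdcov : ∀ a c : H', D.deadE a c → D.ηi a c ∩ D.ηi c a ⊆ NX := by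
    intro a c hdc
    rw [D.dead_core hdc]
    exact Set.empty_subset _
  rcases ha.2 with ⟨h1, h2, h3, h4⟩ | ⟨h1, h2, h3, h4⟩ | ⟨h1, h2, h3, h4⟩ | ⟨h1, h2, h3, h4⟩ |
    ⟨h1, h2, h3, h4⟩ | ⟨h1, h2, h3, h4⟩ | ⟨h1, h2, h3, h4⟩
  · exact ⟨hkcov _ _ (by simp) h1 h4.symm, hkcov _ _ (by simp) h2 h4.symm, hdcov _ _ h3⟩
  · exact ⟨hkcov' _ _ (by simp) h1 h4.symm, hdcov _ _ h3, hkcov _ _ (by simp) h2 h4.symm⟩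
  · exact ⟨hdcov _ _ h3, hkcov' _ _ (by simp) h1 h4.symm, hkcov' _ _ (by simp) h2 h4.symm⟩
  · -- kept x y, t = pick {x,y}
    have hp := pickSet_mem (⟨x, by simp⟩ : ({x, y} : Set H').Nonempty) x
    simp only [Set.mem_insert_iff, Set.mem_singleton_iff] at hp
    rw [← h4] at hp
    rcases hp with hp | hp
    · exact ⟨hkcov _ _ (by simp) h1 hp.symm, hdcov _ _ h2, hdcov _ _ h3⟩
    · exact ⟨hkcov' _ _ (by simp) h1 hp.symm, hdcov _ _ h2, hdcov _ _ h3⟩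
  · have hp := pickSet_mem (⟨x, by simp⟩ : ({x, z} : Set H').Nonempty) x
    simp only [Set.mem_insert_iff, Set.mem_singleton_iff] at hp
    rw [← h4] at hp
    rcases hp with hp | hp
    · exact ⟨hdcov _ _ h2, hkcov _ _ (by simp) h1 hp.symm, hdcov _ _ h3⟩
    · exact ⟨hdcov _ _ h2, hkcov' _ _ (by simp) h1 hp.symm, hdcov _ _ h3⟩
  · have hp := pickSet_mem (⟨y, by simp⟩ : ({y, z} : Set H').Nonempty) y
    simp only [Set.mem_insert_iff, Set.mem_singleton_iff] at hp
    rw [← h4] at hp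
    rcases hp with hp | hp
    · exact ⟨hdcov _ _ h2, hdcov _ _ h3, hkcov _ _ (by simp) h1 hp.symm⟩
    · exact ⟨hdcov _ _ h2, hdcov _ _ h3, hkcov' _ _ (by simp) h1 hp.symm⟩
  · exact ⟨hdcov _ _ h1, hdcov _ _ h2, hdcov _ _ h3⟩

/-- A triangle set containing two prescribed vertices is inside their full edge. -/
lemma mem_fullEdge_of_mem_ηt_two {v : V} {x y r z w' : H'} (hv : v ∈ D.ηt x y r)
    (hz : z ∈ ({x, y, r} : Set H')) (hw : w' ∈ ({x, y, r} : Set H')) (hne : z ≠ w') :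
    v ∈ D.fullEdge z w' := by
  have htri := D.tri_of_mem_ηt hv
  obtain ⟨hne1, hne2, hne3⟩ := tri_ne' htri
  simp only [Set.mem_insert_iff, Set.mem_singleton_iff] at hz hw
  rcases hz with hz | hz | hz <;> rcases hw with hw | hw | hw <;> subst hz <;> subst hw <;>
    first
    | (exact absurd rfl hne)
    | (exact D.mem_fullEdge_t hv)
    | (exact D.mem_fullEdge_t (by rwa [D.ηt_symm12] at hv))
    | (exact D.mem_fullEdge_t (by rwa [D.ηt_symm23] at hv))
    | (exact D.mem_fullEdge_t (by rwa [D.ηt_rot] at hv))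
    | (exact D.mem_fullEdge_t (by rwa [D.ηt_rot, D.ηt_rot] at hv))
    | (exact D.mem_fullEdge_t (by rwa [D.ηt_symm12, D.ηt_symm23] at hv))
    | (exact D.mem_fullEdge_t (by rwa [D.ηt_symm23, D.ηt_symm12] at hv))
    | (exact D.mem_fullEdge_t (by rwa [D.ηt_rot, D.ηt_symm23] at hv))
    | (exact D.mem_fullEdge_t (by rwa [D.ηt_symm23, D.ηt_rot] at hv))

/-- Closure of `ηv x ∪ ηe x c` for a dead edge `xc` alive only at `x`. -/
lemma sealed_v_plus_deadE (x c : H') (hIcx : D.ηi c x = ∅)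
    (hcov : ∀ d, H.Adj x d → d ≠ c → D.ηi x d ⊆ NX) :
    ∀ a c', G.Adj a c' → a ∈ D.ηv x ∪ D.ηe x c → a ∉ NX → c' ∉ NX →
      c' ∈ D.ηv x ∪ D.ηe x c := by
  intro a c' hadj ha haN hcN
  rcases ha with hav | hae
  · rcases D.edge_cond a c' hadj with ⟨s, hs1, hs2⟩ | ⟨s, t', h1, _⟩ | ⟨s, t', r', h1, _⟩ |
      ⟨s, t', r', _, _, _, hc⟩ | ⟨s, t', hadj', hc⟩ | ⟨s, t', r', _, hc⟩
    · rw [D.eq_of_mem_ηv hs1 hav] at hs2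
      exact Or.inl hs2
    · exact absurd h1 (fun hh => D.not_mem_ηv_ηe hav hh)
    · exact absurd h1 (fun hh => D.not_mem_ηv_ηt hav hh)
    · rcases hc with ⟨h1, _⟩ | ⟨_, h2⟩
      · exact absurd (D.mem_ηe_of_ηi h1) (fun hh => D.not_mem_ηv_ηe hav hh)
      · exact absurd (D.mem_ηe_of_ηi h2) (fun hh => D.not_mem_ηv_ηe hav hh)
    · rcases hc with ⟨h1, _⟩ | ⟨h1, h2⟩
      · exact absurd (D.mem_ηe_of_ηi h1) (fun hh => D.not_mem_ηv_ηe hav hh)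
      · rw [D.eq_of_mem_ηv h2 hav] at h1 hadj'
        by_cases ht' : t' = c
        · subst ht'
          exact Or.inr (D.mem_ηe_of_ηi h1)
        · exact absurd (hcov t' hadj' ht' h1) hcN
    · rcases hc with ⟨h1, _⟩ | ⟨_, h2⟩
      · exact absurd h1 (fun hh => D.not_mem_ηv_ηt hav hh)
      · exact absurd (D.mem_ηe_of_ηi h2.1) (fun hh => D.not_mem_ηv_ηe hav hh)
  · have hIa : ∀ s t' : H', a ∈ D.ηi s t' → s = x ∧ t' = c := by
      intro s t' hst
      rcases D.pair_eq_of_mem_ηe (D.mem_ηe_of_ηi hst) hae with ⟨e1, e2⟩ | ⟨e1, e2⟩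
      · exact ⟨e1, e2⟩
      · subst e1; subst e2
        rw [hIcx] at hst
        exact absurd hst (Set.notMem_empty a)
    rcases D.edge_cond a c' hadj with ⟨s, hs1, _⟩ | ⟨s, t', h1, h2⟩ | ⟨s, t', r', h1, _⟩ |
      ⟨s, t', r', hst, hsr, hne, hc⟩ | ⟨s, t', hadj', hc⟩ | ⟨s, t', r', _, hc⟩
    · exact absurd hae (fun hh => D.not_mem_ηv_ηe hs1 hh)
    · rcases D.pair_eq_of_mem_ηe h1 hae with ⟨e1, e2⟩ | ⟨e1, e2⟩
      · subst e1; subst e2; exact Or.inr h2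
      · subst e1; subst e2; exact Or.inr (by rwa [D.ηe_symm])
    · exact absurd h1 (fun hh => D.not_mem_ηe_ηt hae hh)
    · rcases hc with ⟨h1, h2⟩ | ⟨h1, h2⟩
      · obtain ⟨e1, e2⟩ := hIa _ _ h1
        subst e1; subst e2
        exact absurd (hcov r' hsr (fun hh => hne (hh ▸ rfl)) h2) hcN
      · obtain ⟨e1, e2⟩ := hIa _ _ h2
        subst e1; subst e2
        exact absurd (hcov t' hst (fun hh => hne ((hh ▸ rfl : t' = r').symm ▸ rfl)) h1) hcN
    · rcases hc with ⟨h1, h2⟩ | ⟨_, h2⟩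
      · obtain ⟨e1, _⟩ := hIa _ _ h1
        subst e1
        exact Or.inl h2
      · exact absurd hae (fun hh => D.not_mem_ηv_ηe h2 hh)
    · rcases hc with ⟨h1, _⟩ | ⟨h1, h2⟩
      · exact absurd h1 (fun hh => D.not_mem_ηe_ηt hae hh)
      · obtain ⟨e1, e2⟩ := hIa _ _ h2.1
        subst e1; subst e2
        rw [hIcx] at h2
        exact absurd h2.2 (Set.notMem_empty a)

end ESD


namespace ESD

variable {V : Type*} {H' : Type*} {G : SimpleGraph V} {H : SimpleGraph H'} (D : ESD G H)

/-- Case I for a kept edge whose extended full-edge region is heavy. -/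
lemma caseI_keptEdge [Fintype V] (w : V → ℕ) (b : ℕ) (z w' : H') (hk : D.kept z w')
    (hbig : b < wsum w (D.fullEdge z w' ∪ (D.vstar z ∪ D.vstar w')))
    (hW : wsum w Set.univ ≤ 2 * b) (hD : D.ParticlesSmall w b) :
    ∃ X : Finset V, X.card ≤ 2 ∧ CompsSmall G w (Set.univ \ closedNbhd G (↑X : Set V)) b := by
  classical
  obtain ⟨p, hp⟩ := hk.2.1
  obtain ⟨q, hq⟩ := hk.2.2
  refine ⟨{p, q}, le_trans (Finset.card_insert_le _ _) (by simp), ?_⟩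
  set NX := closedNbhd G (↑({p, q} : Finset V) : Set V) with hNX
  have hcovz : ∀ d, H.Adj z d → d ≠ w' → D.ηi z d ⊆ NX := by
    intro d hadj hne v hv
    exact Or.inr ⟨p, by simp, D.complete z w' d hk.1 hadj hne.symm p hp v hv⟩
  have hcovw : ∀ d, H.Adj w' d → d ≠ z → D.ηi w' d ⊆ NX := by
    intro d hadj hne v hv
    exact Or.inr ⟨q, by simp, D.complete w' z d hk.1.symm hadj hne.symm q hq v hv⟩
  set E : Set V := D.fullEdge z w' ∪ (D.vstar z ∪ D.vstar w') with hE
  set R : Set (Set V) := {S | S = D.fullEdge z w' ∨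
    (∃ x y, D.deadE x y ∧ (D.targetE x y = z ∨ D.targetE x y = w') ∧ S = D.ηe x y) ∨
    (∃ x y r t, D.AssignedT x y r t ∧
      ((z = t ∧ w' ∉ ({x, y, r} : Set H')) ∨ (w' = t ∧ z ∉ ({x, y, r} : Set H'))) ∧
      S = D.ηt x y r)} with hR
  apply comps_small_of_regions G w b _ R
  · rintro S (rfl | ⟨x, y, hd, _, rfl⟩ | ⟨x, y, r, t, ha, _, rfl⟩)
    · exact hD.2.2.2.1 z w' hk.1
    · exact le_trans (wsum_mono w (fun v hv => D.mem_fullEdge_e hv)) (hD.2.2.2.1 x y hd.1)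
    · exact hD.2.2.2.2 x y r ha.1
  · rintro S (rfl | ⟨x, y, hd, htg, rfl⟩ | ⟨x, y, r, t, ha, hg, rfl⟩)
    · exact D.sealed_fullEdge z w' hcovz hcovw
    · have hne_zw : z ≠ w' := hk.1.ne
      rcases htg with htg | htg
      · have hzmem : z = x ∨ z = y := by
          rcases D.targetE_mem x y with h | h <;> rw [htg] at h
          · exact Or.inl h
          · exact Or.inr h
        have hxw : x ≠ w' := by
          rintro rfl
          rcases hzmem with h | h
          · exact hne_zw h
          · rw [← h] at hd
            exact hd.2 (D.kept_symm hk)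
        have hyw : y ≠ w' := by
          rintro rfl
          rcases hzmem with h | h
          · rw [← h] at hd
            exact hd.2 hk
          · exact hne_zw h
        obtain ⟨hIx, hIy⟩ := D.deadE_interfaces_covered hd htg hcovz hxw hyw
        exact D.sealed_deadE x y hIx hIy
      · have hwmem : w' = x ∨ w' = y := by
          rcases D.targetE_mem x y with h | h <;> rw [htg] at h
          · exact Or.inl h
          · exact Or.inr h
        have hxz : x ≠ z := by
          rintro rfl
          rcases hwmem with h | h
          · exact hne_zw h.symm
          · rw [← h] at hd
            exact hd.2 hk
        have hyz : y ≠ z := by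
          rintro rfl
          rcases hwmem with h | h
          · rw [← h] at hd
            exact hd.2 (D.kept_symm hk)
          · exact hne_zw h.symm
        obtain ⟨hIx, hIy⟩ := D.deadE_interfaces_covered hd htg hcovw hxz hyz
        exact D.sealed_deadE x y hIx hIy
    · rcases hg with ⟨ht, hnm⟩ | ⟨ht, hnm⟩
      · rw [← ht] at ha
        have hexc : ∀ d, d ∈ ({x, y, r} : Set H') → D.kept z d → d ≠ w' := by
          intro d hdm _
          rintro rfl
          exact hnm hdm
        obtain ⟨c1, c2, c3⟩ := D.cores_covered ha hcovz hexc
        exact D.sealed_tri x y r c1 c2 c3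
      · rw [← ht] at ha
        have hexc : ∀ d, d ∈ ({x, y, r} : Set H') → D.kept w' d → d ≠ z := by
          intro d hdm _
          rintro rfl
          exact hnm hdm
        obtain ⟨c1, c2, c3⟩ := D.cores_covered ha hcovw hexc
        exact D.sealed_tri x y r c1 c2 c3
  · have hEsub : E ⊆ ⋃₀ R := by
      rintro v (hv | hv)
      · exact ⟨D.fullEdge z w', Or.inl rfl, hv⟩
      · have main : ∀ t0 : H', (z = t0 ∨ w' = t0) → v ∈ D.vstar t0 → v ∈ ⋃₀ R := by
          rintro t0 ht0 ((hv | hv) | hv)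
          · rcases ht0 with rfl | rfl
            · exact ⟨D.fullEdge z w', Or.inl rfl, D.mem_fullEdge_vl hv⟩
            · exact ⟨D.fullEdge z w', Or.inl rfl, D.mem_fullEdge_vr hv⟩
          · obtain ⟨x, y, hdxy, htg, hvm⟩ := hv
            refine ⟨D.ηe x y, Or.inr (Or.inl ⟨x, y, hdxy, ?_, rfl⟩), hvm⟩
            rcases ht0 with rfl | rfl
            · exact Or.inl htg
            · exact Or.inr htg
          · obtain ⟨x, y, r, ha, hvm⟩ := hv
            rcases ht0 with rfl | rfl
            · by_cases hwm : w' ∈ ({x, y, r} : Set H')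
              · exact ⟨D.fullEdge z w', Or.inl rfl,
                  D.mem_fullEdge_of_mem_ηt_two hvm (D.AssignedT_mem ha) hwm hk.1.ne⟩
              · exact ⟨D.ηt x y r, Or.inr (Or.inr ⟨x, y, r, z, ha, Or.inl ⟨rfl, hwm⟩, rfl⟩),
                  hvm⟩
            · by_cases hzm : z ∈ ({x, y, r} : Set H')
              · exact ⟨D.fullEdge z w', Or.inl rfl,
                  D.mem_fullEdge_of_mem_ηt_two hvm hzm (D.AssignedT_mem ha) hk.1.ne⟩
              · exact ⟨D.ηt x y r, Or.inr (Or.inr ⟨x, y, r, w', ha, Or.inr ⟨rfl, hzm⟩, rfl⟩),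
                  hvm⟩
        rcases hv with hv | hv
        · exact main z (Or.inl rfl) hv
        · exact main w' (Or.inr rfl) hv
    have h1 : wsum w ((⋃₀ R)ᶜ) ≤ wsum w Eᶜ :=
      wsum_mono w (Set.compl_subset_compl.mpr hEsub)
    have h2 := wsum_add_compl_le w E
    omega
end ESD


namespace ESD

variable {V : Type*} {H' : Type*} {G : SimpleGraph V} {H : SimpleGraph H'} (D : ESD G H)

/-- Case I for a vertex whose extended vertex region is heavy. -/
lemma caseI_vertex [Fintype V] (w : V → ℕ) (b : ℕ) (x : H')
    (hbig : b < wsum w (D.vstar x))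
    (hW : wsum w Set.univ ≤ 2 * b) (hD : D.ParticlesSmall w b) :
    ∃ X : Finset V, X.card ≤ 2 ∧ CompsSmall G w (Set.univ \ closedNbhd G (↑X : Set V)) b := by
  classical
  have hvx_bound : wsum w (D.ηv x) ≤ b := hD.1 x
  by_cases hal : ∃ c, H.Adj x c ∧ (D.ηi x c).Nonempty
  · obtain ⟨c, hadjc, hpe⟩ := hal
    obtain ⟨p, hp⟩ := hpe
    have hxc_ne : x ≠ c := hadjc.ne
    by_cases hcx : (D.ηi c x).Nonempty
    · -- B1 : the edge xc is kept
      obtain ⟨q, hq⟩ := hcx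
      have hkxc : D.kept x c := ⟨hadjc, ⟨p, hp⟩, ⟨q, hq⟩⟩
      refine ⟨{p, q}, le_trans (Finset.card_insert_le _ _) (by simp), ?_⟩
      set NX := closedNbhd G (↑({p, q} : Finset V) : Set V) with hNX
      have hcovx : ∀ d, H.Adj x d → d ≠ c → D.ηi x d ⊆ NX := by
        intro d hadj hne v hv
        exact Or.inr ⟨p, by simp, D.complete x c d hadjc hadj hne.symm p hp v hv⟩
      have hcovc : ∀ d, H.Adj c d → d ≠ x → D.ηi c d ⊆ NX := by
        intro d hadj hne v hv
        exact Or.inr ⟨q, by simp, D.complete c x d hadjc.symm hadj hne.symm q hq v hv⟩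
      set R : Set (Set V) := {S | S = D.fullEdge x c ∨
        (∃ a y', D.deadE a y' ∧ D.targetE a y' = x ∧ S = D.ηe a y') ∨
        (∃ a y' r t, D.AssignedT a y' r t ∧ x = t ∧ c ∉ ({a, y', r} : Set H') ∧
          S = D.ηt a y' r)} with hR
      apply comps_small_of_regions G w b _ R
      · rintro S (rfl | ⟨a, y', hd, _, rfl⟩ | ⟨a, y', r, t, ha, _, _, rfl⟩)
        · exact hD.2.2.2.1 x c hadjc
        · exact le_trans (wsum_mono w (fun v hv => D.mem_fullEdge_e hv)) (hD.2.2.2.1 a y' hd.1)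
        · exact hD.2.2.2.2 a y' r ha.1
      · rintro S (rfl | ⟨a, y', hd, htg, rfl⟩ | ⟨a, y', r, t, ha, ht, hnm, rfl⟩)
        · exact D.sealed_fullEdge x c hcovx hcovc
        · have hxmem : x = a ∨ x = y' := by
            rcases D.targetE_mem a y' with h | h <;> rw [htg] at h
            · exact Or.inl h
            · exact Or.inr h
          have hane : a ≠ c := by
            rintro rfl
            rcases hxmem with h | h
            · exact hxc_ne h
            · rw [← h] at hd
              exact hd.2 (D.kept_symm hkxc)
          have hy'ne : y' ≠ c := by
            rintro rfl
            rcases hxmem with h | h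
            · rw [← h] at hd
              exact hd.2 hkxc
            · exact hxc_ne h
          obtain ⟨hIx, hIy⟩ := D.deadE_interfaces_covered hd htg hcovx hane hy'ne
          exact D.sealed_deadE a y' hIx hIy
        · rw [← ht] at ha
          have hexc : ∀ d, d ∈ ({a, y', r} : Set H') → D.kept x d → d ≠ c := by
            intro d hdm _
            rintro rfl
            exact hnm hdm
          obtain ⟨c1, c2, c3⟩ := D.cores_covered ha hcovx hexc
          exact D.sealed_tri a y' r c1 c2 c3
      · have hEsub : D.vstar x ⊆ ⋃₀ R := by
          rintro v ((hv | hv) | hv)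
          · exact ⟨D.fullEdge x c, Or.inl rfl, D.mem_fullEdge_vl hv⟩
          · obtain ⟨a, y', hdxy, htg, hvm⟩ := hv
            exact ⟨D.ηe a y', Or.inr (Or.inl ⟨a, y', hdxy, htg, rfl⟩), hvm⟩
          · obtain ⟨a, y', r, ha, hvm⟩ := hv
            by_cases hcm : c ∈ ({a, y', r} : Set H')
            · exact ⟨D.fullEdge x c, Or.inl rfl,
                D.mem_fullEdge_of_mem_ηt_two hvm (D.AssignedT_mem ha) hcm hxc_ne⟩
            · exact ⟨D.ηt a y' r, Or.inr (Or.inr ⟨a, y', r, x, ha, rfl, hcm, rfl⟩), hvm⟩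
        have h1 : wsum w ((⋃₀ R)ᶜ) ≤ wsum w (D.vstar x)ᶜ :=
          wsum_mono w (Set.compl_subset_compl.mpr hEsub)
        have h2 := wsum_add_compl_le w (D.vstar x)
        omega
    · -- B2 : the edge xc is dead, alive only at x
      have hIcx : D.ηi c x = ∅ := by rwa [Set.not_nonempty_iff_eq_empty] at hcx
      have hdxc : D.deadE x c := ⟨hadjc, fun hk => hcx hk.2.2⟩
      refine ⟨{p}, by simp, ?_⟩
      set NX := closedNbhd G (↑({p} : Finset V) : Set V) with hNX
      have hcovx : ∀ d, H.Adj x d → d ≠ c → D.ηi x d ⊆ NX := by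
        intro d hadj hne v hv
        exact Or.inr ⟨p, by simp, D.complete x c d hadjc hadj hne.symm p hp v hv⟩
      set R : Set (Set V) := {S | S = D.ηv x ∪ D.ηe x c ∨
        (∃ a y', D.deadE a y' ∧ D.targetE a y' = x ∧
          ¬((a = x ∧ y' = c) ∨ (a = c ∧ y' = x)) ∧ S = D.ηe a y') ∨
        (∃ a y' r t, D.AssignedT a y' r t ∧ x = t ∧ S = D.ηt a y' r)} with hR
      apply comps_small_of_regions G w b _ R
      · rintro S (rfl | ⟨a, y', hd, _, _, rfl⟩ | ⟨a, y', r, t, ha, _, rfl⟩)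
        · refine le_trans (wsum_mono w ?_) (hD.2.2.2.1 x c hadjc)
          rintro v (hv | hv)
          · exact D.mem_fullEdge_vl hv
          · exact D.mem_fullEdge_e hv
        · exact le_trans (wsum_mono w (fun v hv => D.mem_fullEdge_e hv)) (hD.2.2.2.1 a y' hd.1)
        · exact hD.2.2.2.2 a y' r ha.1
      · rintro S (rfl | ⟨a, y', hd, htg, hpair, rfl⟩ | ⟨a, y', r, t, ha, ht, rfl⟩)
        · exact D.sealed_v_plus_deadE x c hIcx hcovx
        · have hxmem : x = a ∨ x = y' := by
            rcases D.targetE_mem a y' with h | h <;> rw [htg] at h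
            · exact Or.inl h
            · exact Or.inr h
          have hane : a ≠ c := by
            rintro rfl
            rcases hxmem with h | h
            · exact hxc_ne h
            · exact hpair (Or.inr ⟨rfl, h.symm⟩)
          have hy'ne : y' ≠ c := by
            rintro rfl
            rcases hxmem with h | h
            · exact hpair (Or.inl ⟨h.symm, rfl⟩)
            · exact hxc_ne h
          obtain ⟨hIx, hIy⟩ := D.deadE_interfaces_covered hd htg hcovx hane hy'ne
          exact D.sealed_deadE a y' hIx hIy
        · rw [← ht] at ha
          have hexc : ∀ d, d ∈ ({a, y', r} : Set H') → D.kept x d → d ≠ c := by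
            intro d _ hkd
            rintro rfl
            exact hdxc.2 hkd
          obtain ⟨c1, c2, c3⟩ := D.cores_covered ha hcovx hexc
          exact D.sealed_tri a y' r c1 c2 c3
      · have hEsub : D.vstar x ⊆ ⋃₀ R := by
          rintro v ((hv | hv) | hv)
          · exact ⟨D.ηv x ∪ D.ηe x c, Or.inl rfl, Or.inl hv⟩
          · obtain ⟨a, y', hdxy, htg, hvm⟩ := hv
            by_cases hpair : (a = x ∧ y' = c) ∨ (a = c ∧ y' = x)
            · refine ⟨D.ηv x ∪ D.ηe x c, Or.inl rfl, Or.inr ?_⟩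
              rcases hpair with ⟨rfl, rfl⟩ | ⟨rfl, rfl⟩
              · exact hvm
              · rwa [D.ηe_symm]
            · exact ⟨D.ηe a y', Or.inr (Or.inl ⟨a, y', hdxy, htg, hpair, rfl⟩), hvm⟩
          · obtain ⟨a, y', r, ha, hvm⟩ := hv
            exact ⟨D.ηt a y' r, Or.inr (Or.inr ⟨a, y', r, x, ha, rfl, rfl⟩), hvm⟩
        have h1 : wsum w ((⋃₀ R)ᶜ) ≤ wsum w (D.vstar x)ᶜ :=
          wsum_mono w (Set.compl_subset_compl.mpr hEsub)
        have h2 := wsum_add_compl_le w (D.vstar x)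
        omega
  · -- A : no alive direction at x
    push_neg at hal
    have hall : ∀ d, D.ηi x d = ∅ := by
      intro d
      by_cases hadj : H.Adj x d
      · exact hal d hadj
      · rw [Set.eq_empty_iff_forall_notMem]
        intro v hv
        have := D.mem_ηe_of_ηi hv
        rw [D.ηe_empty x d hadj] at this
        exact this
    refine ⟨∅, by simp, ?_⟩
    set NX := closedNbhd G (↑(∅ : Finset V) : Set V) with hNX
    have hcovx : ∀ d, H.Adj x d → d ≠ x → D.ηi x d ⊆ NX := by
      intro d _ _
      rw [hall d]
      exact Set.empty_subset _
    set R : Set (Set V) := {S | S = D.ηv x ∨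
      (∃ a y', D.deadE a y' ∧ D.targetE a y' = x ∧ S = D.ηe a y') ∨
      (∃ a y' r t, D.AssignedT a y' r t ∧ x = t ∧ S = D.ηt a y' r)} with hR
    apply comps_small_of_regions G w b _ R
    · rintro S (rfl | ⟨a, y', hd, _, rfl⟩ | ⟨a, y', r, t, ha, _, rfl⟩)
      · exact hvx_bound
      · exact le_trans (wsum_mono w (fun v hv => D.mem_fullEdge_e hv)) (hD.2.2.2.1 a y' hd.1)
      · exact hD.2.2.2.2 a y' r ha.1
    · rintro S (rfl | ⟨a, y', hd, htg, rfl⟩ | ⟨a, y', r, t, ha, ht, rfl⟩)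
      · apply D.sealed_ηv x
        intro d _
        rw [hall d]
        exact Set.empty_subset _
      · have hI1 : D.ηi a y' = ∅ := by
          by_cases h1 : (D.ηi a y').Nonempty
          · exfalso
            have hax : a = x := by rw [← htg, D.targetE_of_alive h1]
            rw [hax] at h1
            rw [hall y'] at h1
            exact Set.not_nonempty_empty h1
          · rwa [Set.not_nonempty_iff_eq_empty] at h1
        have hI2 : D.ηi y' a = ∅ := by
          by_cases h2 : (D.ηi y' a).Nonempty
          · exfalso
            have hax : y' = x := by
              rw [← htg, D.targetE_symm hd, D.targetE_of_alive h2]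
            rw [hax] at h2
            rw [hall a] at h2
            exact Set.not_nonempty_empty h2
          · rwa [Set.not_nonempty_iff_eq_empty] at h2
        apply D.sealed_deadE a y'
        · rw [hI1]; exact Set.empty_subset _
        · rw [hI2]; exact Set.empty_subset _
      · rw [← ht] at ha
        have hexc : ∀ d, d ∈ ({a, y', r} : Set H') → D.kept x d → d ≠ x := by
          intro d _ hkd
          exfalso
          have := hkd.2.1
          rw [hall d] at this
          exact Set.not_nonempty_empty this
        obtain ⟨c1, c2, c3⟩ := D.cores_covered ha hcovx hexc
        exact D.sealed_tri a y' r c1 c2 c3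
    · have hEsub : D.vstar x ⊆ ⋃₀ R := by
        rintro v ((hv | hv) | hv)
        · exact ⟨D.ηv x, Or.inl rfl, hv⟩
        · obtain ⟨a, y', hdxy, htg, hvm⟩ := hv
          exact ⟨D.ηe a y', Or.inr (Or.inl ⟨a, y', hdxy, htg, rfl⟩), hvm⟩
        · obtain ⟨a, y', r, ha, hvm⟩ := hv
          exact ⟨D.ηt a y' r, Or.inr (Or.inr ⟨a, y', r, x, ha, rfl, rfl⟩), hvm⟩
      have h1 : wsum w ((⋃₀ R)ᶜ) ≤ wsum w (D.vstar x)ᶜ :=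
        wsum_mono w (Set.compl_subset_compl.mpr hEsub)
      have h2 := wsum_add_compl_le w (D.vstar x)
      omega

end ESD


namespace ESD

variable {V : Type*} {H' : Type*} {G : SimpleGraph V} {H : SimpleGraph H'} (D : ESD G H)

/-- The kept-triangle predicate (same shape as `Tri`). -/
def keptTri (x y z : H') : Prop := D.kept x y ∧ D.kept y z ∧ D.kept x z

/-- Vertices of `H` surviving the one-shot cleaning. -/
def survives (x : H') : Prop := (∃ y, D.kept x y) ∨ (D.vstar x).Nonempty

lemma assignedT_exists {a b c : H'} (htri : Tri H a b c) (hnk : ¬ D.keptTri a b c) :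
    ∃ t, D.AssignedT a b c t := by
  rcases D.kept_or_dead htri.1 with k1 | k1 <;> rcases D.kept_or_dead htri.2.2 with k2 | k2 <;>
    rcases D.kept_or_dead htri.2.1 with k3 | k3
  · exact absurd ⟨k1, k3, k2⟩ hnk
  · exact ⟨a, htri, Or.inl ⟨k1, k2, k3, rfl⟩⟩
  · exact ⟨b, htri, Or.inr (Or.inl ⟨k1, k3, k2, rfl⟩)⟩
  · exact ⟨pickSet {a, b} a, htri, Or.inr (Or.inr (Or.inr (Or.inl ⟨k1, k2, k3, rfl⟩)))⟩
  · exact ⟨c, htri, Or.inr (Or.inr (Or.inl ⟨k2, k3, k1, rfl⟩))⟩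
  · exact ⟨pickSet {a, c} a, htri, Or.inr (Or.inr (Or.inr (Or.inr (Or.inl ⟨k2, k1, k3, rfl⟩))))⟩
  · exact ⟨pickSet {b, c} b, htri,
      Or.inr (Or.inr (Or.inr (Or.inr (Or.inr (Or.inl ⟨k3, k1, k2, rfl⟩)))))⟩
  · exact ⟨pickSet {a, b, c} a, htri,
      Or.inr (Or.inr (Or.inr (Or.inr (Or.inr (Or.inr ⟨k1, k2, k3, rfl⟩)))))⟩

lemma assignedT_of_kept12 {a b c t : H'} (ha : D.AssignedT a b c t) (hk : D.kept a b) :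
    t = a ∨ t = b := by
  rcases ha.2 with ⟨_, _, _, h4⟩ | ⟨_, _, _, h4⟩ | ⟨_, _, h3, _⟩ | ⟨_, _, _, h4⟩ |
    ⟨_, h2, _, _⟩ | ⟨_, h2, _, _⟩ | ⟨h1, _, _, _⟩
  · exact Or.inl h4
  · exact Or.inr h4
  · exact absurd hk h3.2
  · have hp := pickSet_mem (⟨a, by simp⟩ : ({a, b} : Set H').Nonempty) a
    simp only [Set.mem_insert_iff, Set.mem_singleton_iff] at hp
    rw [← h4] at hp
    exact hp
  · exact absurd hk h2.2
  · exact absurd hk h2.2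
  · exact absurd hk h1.2

lemma survivors_finite [Fintype V] : {x : H' | D.survives x}.Finite := by
  classical
  by_cases hV : Nonempty V
  · have hA : {x : H' | (D.ηv x).Nonempty}.Finite := by
      set f : H' → V := fun x =>
        if h : (D.ηv x).Nonempty then h.choose else Classical.arbitrary V with hf
      apply Set.Finite.of_finite_image (f := f) (Set.toFinite _)
      intro x hx y hy hxy
      have hx' : (D.ηv x).Nonempty := hx
      have hy' : (D.ηv y).Nonempty := hy
      have hfx : f x ∈ D.ηv x := by
        simp only [hf]
        rw [dif_pos hx']
        exact hx'.choose_spec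
      have hfy : f y ∈ D.ηv y := by
        simp only [hf]
        rw [dif_pos hy']
        exact hy'.choose_spec
      rw [hxy] at hfx
      exact D.eq_of_mem_ηv hfx hfy
    have hB : {x : H' | ∃ y, (D.ηe x y).Nonempty}.Finite := by
      set S := {x : H' | ∃ y, (D.ηe x y).Nonempty} with hS
      set pa : H' → H' := fun x =>
        if h : ∃ y, (D.ηe x y).Nonempty then h.choose else x with hpa
      have hpagood : ∀ x, x ∈ S → (D.ηe x (pa x)).Nonempty := by
        intro x hx
        have hx' : ∃ y, (D.ηe x y).Nonempty := hx
        simp only [hpa]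
        rw [dif_pos hx']
        exact hx'.choose_spec
      set g : H' → V := fun x =>
        if h2 : (D.ηe x (pa x)).Nonempty then h2.choose else Classical.arbitrary V with hg
      have hgood : ∀ x, x ∈ S → g x ∈ D.ηe x (pa x) := by
        intro x hx
        simp only [hg]
        rw [dif_pos (hpagood x hx)]
        exact (hpagood x hx).choose_spec
      have hsub : S ⊆ ⋃ v : V, {x | x ∈ S ∧ g x = v} :=
        fun x hx => Set.mem_iUnion.mpr ⟨g x, hx, rfl⟩
      refine Set.Finite.subset (Set.finite_iUnion ?_) hsub
      intro v
      rcases Set.eq_empty_or_nonempty {x | x ∈ S ∧ g x = v} with he | ⟨x1, hx1⟩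
      · rw [he]; exact Set.finite_empty
      · apply Set.Finite.subset ((Set.finite_singleton (pa x1)).insert x1)
        intro x2 hx2
        have h1 := hgood x1 hx1.1
        have h2 := hgood x2 hx2.1
        rw [hx1.2] at h1
        rw [hx2.2] at h2
        rcases D.pair_eq_of_mem_ηe h2 h1 with ⟨e1, _⟩ | ⟨e1, _⟩
        · exact Set.mem_insert_iff.mpr (Or.inl e1)
        · exact Set.mem_insert_iff.mpr (Or.inr (by simp [e1]))
    have hC : {x : H' | ∃ y z, (D.ηt x y z).Nonempty}.Finite := by
      set S := {x : H' | ∃ y z, (D.ηt x y z).Nonempty} with hS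
      set pa : H' → H' × H' := fun x =>
        if h : ∃ y z, (D.ηt x y z).Nonempty then ⟨h.choose, h.choose_spec.choose⟩
        else (x, x) with hpa
      have hpagood : ∀ x, x ∈ S → (D.ηt x (pa x).1 (pa x).2).Nonempty := by
        intro x hx
        have hx' : ∃ y z, (D.ηt x y z).Nonempty := hx
        simp only [hpa]
        rw [dif_pos hx']
        exact hx'.choose_spec.choose_spec
      set g : H' → V := fun x =>
        if h2 : (D.ηt x (pa x).1 (pa x).2).Nonempty then h2.choose
        else Classical.arbitrary V with hg
      have hgood : ∀ x, x ∈ S → g x ∈ D.ηt x (pa x).1 (pa x).2 := by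
        intro x hx
        simp only [hg]
        rw [dif_pos (hpagood x hx)]
        exact (hpagood x hx).choose_spec
      have hsub : S ⊆ ⋃ v : V, {x | x ∈ S ∧ g x = v} :=
        fun x hx => Set.mem_iUnion.mpr ⟨g x, hx, rfl⟩
      refine Set.Finite.subset (Set.finite_iUnion ?_) hsub
      intro v
      rcases Set.eq_empty_or_nonempty {x | x ∈ S ∧ g x = v} with he | ⟨x1, hx1⟩
      · rw [he]; exact Set.finite_empty
      · apply Set.Finite.subset
          (((Set.finite_singleton (pa x1).2).insert (pa x1).1).insert x1)
        intro x2 hx2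
        have h1 := hgood x1 hx1.1
        have h2 := hgood x2 hx2.1
        rw [hx1.2] at h1
        rw [hx2.2] at h2
        have he2 := D.triple_eq_of_mem_ηt h2 h1
        have hme : x2 ∈ ({x2, (pa x2).1, (pa x2).2} : Set H') := by simp
        rw [he2] at hme
        simpa using hme
    apply Set.Finite.subset (hA.union (hB.union hC))
    intro x hx
    rcases hx with ⟨y, hk⟩ | ⟨v, hv⟩
    · exact Or.inr (Or.inl ⟨y, hk.2.1.mono (D.ηi_sub x y)⟩)
    · rcases hv with (hv | hv) | hv
      · exact Or.inl ⟨v, hv⟩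
      · obtain ⟨a, y', hd, htg, hvm⟩ := hv
        rcases D.targetE_mem a y' with h | h <;> rw [htg] at h
        · exact Or.inr (Or.inl ⟨y', v, by rwa [h]⟩)
        · exact Or.inr (Or.inl ⟨a, v, by rw [D.ηe_symm]; rwa [h]⟩)
      · obtain ⟨a, y', r, ha, hvm⟩ := hv
        have hm := D.AssignedT_mem ha
        simp only [Set.mem_insert_iff, Set.mem_singleton_iff] at hm
        rcases hm with h | h | h
        · exact Or.inr (Or.inr ⟨y', r, v, by rwa [h]⟩)
        · exact Or.inr (Or.inr ⟨a, r, v, by rw [← D.ηt_symm12]; rwa [h]⟩)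
        · exact Or.inr (Or.inr ⟨a, y', v, by rw [← D.ηt_rot, ← D.ηt_rot]; rwa [h]⟩)
  · have hempty : {x : H' | D.survives x} = ∅ := by
      rw [Set.eq_empty_iff_forall_notMem]
      intro x hx
      rcases hx with ⟨y, hk⟩ | ⟨v, _⟩
      · obtain ⟨u, _⟩ := hk.2.1
        exact hV ⟨u⟩
      · exact hV ⟨v⟩
    rw [hempty]
    exact Set.finite_empty

end ESD


namespace ESD

variable {V : Type*} {H' : Type*} {G : SimpleGraph V} {H : SimpleGraph H'} (D : ESD G H)

lemma keptTri_swap12 {x y z : H'} (h : D.keptTri x y z) : D.keptTri y x z :=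
  ⟨D.kept_symm h.1, h.2.2, h.2.1⟩

lemma keptTri_swap23 {x y z : H'} (h : D.keptTri x y z) : D.keptTri x z y :=
  ⟨h.2.2, D.kept_symm h.2.1, h.1⟩

/-- Case II : both cleaning conditions hold, so the one-shot cleaning yields a
rigid extended strip decomposition with small particles. -/
lemma caseII [Fintype V] (w : V → ℕ) (b : ℕ)
    (hC1 : ∀ t, wsum w (D.vstar t) ≤ b)
    (hC2 : ∀ z w', D.kept z w' →
      wsum w (D.fullEdge z w' ∪ (D.vstar z ∪ D.vstar w')) ≤ b)
    (hD : D.ParticlesSmall w b) :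
    ∃ (H₂' : Type) (H₂ : SimpleGraph H₂') (D' : ESD G H₂),
      D'.IsRigid ∧ D'.ParticlesSmall w b := by
  classical
  have hfin := D.survivors_finite (V := V)
  haveI := hfin.fintype
  set k := Fintype.card ↥{x : H' | D.survives x} with hk
  set e : Fin k ≃ ↥{x : H' | D.survives x} := (Fintype.equivFin ↥{x : H' | D.survives x}).symm
    with he
  set F : Fin k → H' := fun i => ((e i) : H') with hF
  have hFinj : Function.Injective F := fun i j h => e.injective (Subtype.coe_injective h)
  have hFsurv : ∀ i, D.survives (F i) := fun i => (e i).2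
  have hidx : ∀ x : H', D.survives x → ∃ i, F i = x := by
    intro x hx
    refine ⟨e.symm ⟨x, hx⟩, ?_⟩
    simp only [hF, Equiv.apply_symm_apply]
  set H₂ : SimpleGraph (Fin k) :=
    { Adj := fun i j => D.kept (F i) (F j)
      symm := ⟨fun i j h => D.kept_symm h⟩
      loopless := ⟨fun i h => D.kept_irrefl _ h⟩ } with hH₂
  set nv : Fin k → Set V := fun i => D.vstar (F i) with hnv
  set ne' : Fin k → Fin k → Set V :=
    fun i j => if D.kept (F i) (F j) then D.ηe (F i) (F j) else ∅ with hne'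
  set ni : Fin k → Fin k → Set V :=
    fun i j => if D.kept (F i) (F j) then D.ηi (F i) (F j) else ∅ with hni
  set nt : Fin k → Fin k → Fin k → Set V :=
    fun i j l => if D.keptTri (F i) (F j) (F l) then D.ηt (F i) (F j) (F l) else ∅ with hnt
  have hTri : ∀ i j l, Tri H₂ i j l ↔ D.keptTri (F i) (F j) (F l) := by
    intro i j l
    constructor
    · rintro ⟨h1, h2, h3⟩
      exact ⟨h1, h2, h3⟩
    · rintro ⟨h1, h2, h3⟩
      exact ⟨h1, h2, h3⟩
  have hsurv_kept : ∀ {x y : H'}, D.kept x y → D.survives x := fun h => Or.inl ⟨_, h⟩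
  have hsurv_v : ∀ {x : H'} {v : V}, v ∈ D.vstar x → D.survives x := fun h => Or.inr ⟨_, h⟩
  set D' : ESD G H₂ :=
    { ηv := nv
      ηe := ne'
      ηi := ni
      ηt := nt
      ηe_symm := by
        intro i j
        simp only [hne']
        by_cases h : D.kept (F i) (F j)
        · rw [if_pos h, if_pos (D.kept_symm h), D.ηe_symm]
        · rw [if_neg h, if_neg (fun hh => h (D.kept_symm hh))]
      ηt_symm12 := by
        intro i j l
        simp only [hnt]
        by_cases h : D.keptTri (F i) (F j) (F l)
        · rw [if_pos h, if_pos (D.keptTri_swap12 h), D.ηt_symm12]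
        · rw [if_neg h, if_neg (fun hh => h (D.keptTri_swap12 hh))]
      ηt_symm23 := by
        intro i j l
        simp only [hnt]
        by_cases h : D.keptTri (F i) (F j) (F l)
        · rw [if_pos h, if_pos (D.keptTri_swap23 h), D.ηt_symm23]
        · rw [if_neg h, if_neg (fun hh => h (D.keptTri_swap23 hh))]
      ηe_empty := by
        intro i j hadj
        simp only [hne']
        rw [if_neg hadj]
      ηt_empty := by
        intro i j l htri
        simp only [hnt]
        rw [if_neg (fun hh => htri ((hTri i j l).mpr hh))]
      ηi_sub := by
        intro i j
        simp only [hni, hne']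
        by_cases h : D.kept (F i) (F j)
        · rw [if_pos h, if_pos h]
          exact D.ηi_sub _ _
        · rw [if_neg h, if_neg h]
      cover := by
        intro v
        rcases D.cover v with ⟨x, h1⟩ | ⟨x, y, h1⟩ | ⟨x, y, z, h1⟩
        · obtain ⟨i, rfl⟩ := hidx x (hsurv_v (Or.inl (Or.inl h1)))
          exact Or.inl ⟨i, Or.inl (Or.inl h1)⟩
        · have hadj := D.adj_of_mem_ηe h1
          rcases D.kept_or_dead hadj with hkk | hdd
          · obtain ⟨i, rfl⟩ := hidx x (hsurv_kept hkk)
            obtain ⟨j, rfl⟩ := hidx y (hsurv_kept (D.kept_symm hkk))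
            refine Or.inr (Or.inl ⟨i, j, ?_⟩)
            simp only [hne']
            rw [if_pos hkk]
            exact h1
          · have hmem : v ∈ D.DEx (D.targetE x y) := ⟨x, y, hdd, rfl, h1⟩
            obtain ⟨i, hFi⟩ := hidx _ (hsurv_v (Or.inl (Or.inr hmem)))
            refine Or.inl ⟨i, Or.inl (Or.inr ?_)⟩
            rw [hFi]
            exact hmem
        · have htri := D.tri_of_mem_ηt h1
          by_cases hkt : D.keptTri x y z
          · obtain ⟨i, rfl⟩ := hidx x (hsurv_kept hkt.1)
            obtain ⟨j, rfl⟩ := hidx y (hsurv_kept hkt.2.1)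
            obtain ⟨l, rfl⟩ := hidx z (hsurv_kept (D.kept_symm hkt.2.2))
            refine Or.inr (Or.inr ⟨i, j, l, ?_⟩)
            simp only [hnt]
            rw [if_pos hkt]
            exact h1
          · obtain ⟨t, ht⟩ := D.assignedT_exists htri hkt
            have hmem : v ∈ D.DTx t := ⟨x, y, z, ht, h1⟩
            obtain ⟨i, rfl⟩ := hidx t (hsurv_v (Or.inr hmem))
            exact Or.inl ⟨i, Or.inr hmem⟩
      disj_vv := by
        intro i j hij
        rw [Set.eq_empty_iff_forall_notMem]
        rintro v ⟨h1, h2⟩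
        exact hij (hFinj (D.eq_of_mem_vstar h1 h2))
      disj_ve := by
        intro i a c
        rw [Set.eq_empty_iff_forall_notMem]
        rintro v ⟨h1, h2⟩
        simp only [hne'] at h2
        by_cases h : D.kept (F a) (F c)
        · rw [if_pos h] at h2
          rcases h1 with (h1 | h1) | h1
          · exact D.not_mem_ηv_ηe h1 h2
          · exact D.not_mem_DEx_of_kept h1 h2 h
          · obtain ⟨_, _, _, _, hm⟩ := h1
            exact D.not_mem_ηe_ηt h2 hm
        · rw [if_neg h] at h2
          exact h2
      disj_vt := by
        intro i a c d
        rw [Set.eq_empty_iff_forall_notMem]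
        rintro v ⟨h1, h2⟩
        simp only [hnt] at h2
        by_cases h : D.keptTri (F a) (F c) (F d)
        · rw [if_pos h] at h2
          rcases h1 with (h1 | h1) | h1
          · exact D.not_mem_ηv_ηt h1 h2
          · obtain ⟨_, _, _, _, hm⟩ := h1
            exact D.not_mem_ηe_ηt hm h2
          · exact D.not_mem_DTx_of_keptTri h1 h2 h.1 h.2.2 h.2.1
        · rw [if_neg h] at h2
          exact h2
      disj_ee := by
        intro i j a c hne1 hne2
        simp only [hne']
        by_cases h1 : D.kept (F i) (F j)
        · by_cases h2 : D.kept (F a) (F c)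
          · rw [if_pos h1, if_pos h2]
            apply D.disj_ee
            · rintro ⟨hh1, hh2⟩
              exact hne1 ⟨hFinj hh1, hFinj hh2⟩
            · rintro ⟨hh1, hh2⟩
              exact hne2 ⟨hFinj hh1, hFinj hh2⟩
          · rw [if_neg h2, Set.inter_empty]
        · rw [if_neg h1, Set.empty_inter]
      disj_et := by
        intro i j a c d
        simp only [hne', hnt]
        by_cases h1 : D.kept (F i) (F j)
        · by_cases h2 : D.keptTri (F a) (F c) (F d)
          · rw [if_pos h1, if_pos h2]
            exact D.disj_et _ _ _ _ _
          · rw [if_neg h2, Set.inter_empty]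
        · rw [if_neg h1, Set.empty_inter]
      disj_tt := by
        intro a c d a' c' d' hne12
        simp only [hnt]
        by_cases h1 : D.keptTri (F a) (F c) (F d)
        · by_cases h2 : D.keptTri (F a') (F c') (F d')
          · rw [if_pos h1, if_pos h2]
            apply D.disj_tt
            intro hEq
            apply hne12
            have hd1 : F a ≠ F c := h1.1.1.ne
            have hd2 : F c ≠ F d := h1.2.1.1.ne
            have hd3 : F a ≠ F d := h1.2.2.1.ne
            rcases triple_perm hEq hd1 hd2 hd3 with
              ⟨e1, e2, e3⟩ | ⟨e1, e2, e3⟩ | ⟨e1, e2, e3⟩ | ⟨e1, e2, e3⟩ | ⟨e1, e2, e3⟩ |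
              ⟨e1, e2, e3⟩ <;>
              rw [← hFinj e1, ← hFinj e2, ← hFinj e3] <;>
              (ext t; simp only [Set.mem_insert_iff, Set.mem_singleton_iff]; tauto)
          · rw [if_neg h2, Set.inter_empty]
        · rw [if_neg h1, Set.empty_inter]
      complete := by
        intro i j l hadj1 hadj2 hjl u hu v hv
        simp only [hni] at hu hv
        rw [if_pos hadj1] at hu
        rw [if_pos hadj2] at hv
        exact D.complete (F i) (F j) (F l) hadj1.1 hadj2.1
          (fun hh => hjl (hFinj hh)) u hu v hv
      edge_cond := by
        intro u v huv
        rcases D.edge_cond u v huv with ⟨x, h1, h2⟩ | ⟨x, y, h1, h2⟩ | ⟨x, y, z, h1, h2⟩ |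
          ⟨x, y, z, hxy, hxz, hyz, hc⟩ | ⟨x, y, hxy, hc⟩ | ⟨x, y, z, htri, hc⟩
        · obtain ⟨i, rfl⟩ := hidx x (hsurv_v (Or.inl (Or.inl h1)))
          exact Or.inl ⟨i, Or.inl (Or.inl h1), Or.inl (Or.inl h2)⟩
        · have hadj := D.adj_of_mem_ηe h1
          rcases D.kept_or_dead hadj with hkk | hdd
          · obtain ⟨i, rfl⟩ := hidx x (hsurv_kept hkk)
            obtain ⟨j, rfl⟩ := hidx y (hsurv_kept (D.kept_symm hkk))
            refine Or.inr (Or.inl ⟨i, j, ?_, ?_⟩) <;>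
              simp only [hne'] <;> rw [if_pos hkk]
            · exact h1
            · exact h2
          · have hm1 : u ∈ D.DEx (D.targetE x y) := ⟨x, y, hdd, rfl, h1⟩
            have hm2 : v ∈ D.DEx (D.targetE x y) := ⟨x, y, hdd, rfl, h2⟩
            obtain ⟨i, hFi⟩ := hidx _ (hsurv_v (Or.inl (Or.inr hm1)))
            refine Or.inl ⟨i, Or.inl (Or.inr ?_), Or.inl (Or.inr ?_)⟩ <;> rw [hFi]
            · exact hm1
            · exact hm2
        · have htri := D.tri_of_mem_ηt h1
          by_cases hkt : D.keptTri x y z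
          · obtain ⟨i, rfl⟩ := hidx x (hsurv_kept hkt.1)
            obtain ⟨j, rfl⟩ := hidx y (hsurv_kept hkt.2.1)
            obtain ⟨l, rfl⟩ := hidx z (hsurv_kept (D.kept_symm hkt.2.2))
            refine Or.inr (Or.inr (Or.inl ⟨i, j, l, ?_, ?_⟩)) <;>
              simp only [hnt] <;> rw [if_pos hkt]
            · exact h1
            · exact h2
          · obtain ⟨t, ht⟩ := D.assignedT_exists htri hkt
            have hm1 : u ∈ D.DTx t := ⟨x, y, z, ht, h1⟩
            have hm2 : v ∈ D.DTx t := ⟨x, y, z, ht, h2⟩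
            obtain ⟨i, rfl⟩ := hidx t (hsurv_v (Or.inr hm1))
            exact Or.inl ⟨i, Or.inr hm1, Or.inr hm2⟩
        · -- interfaces at a common vertex
          have main : ∀ u' v' : V, G.Adj u' v' → u' ∈ D.ηi x y → v' ∈ D.ηi x z →
              (∃ i j l, H₂.Adj i j ∧ H₂.Adj i l ∧ j ≠ l ∧
                ((u' ∈ ni i j ∧ v' ∈ ni i l) ∨ (v' ∈ ni i j ∧ u' ∈ ni i l))) ∨
              (∃ i j, H₂.Adj i j ∧ ((u' ∈ ni i j ∧ v' ∈ nv i) ∨ (v' ∈ ni i j ∧ u' ∈ nv i))) ∨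
              (∃ i, u' ∈ nv i ∧ v' ∈ nv i) := by
            intro u' v' _ hu hv
            rcases D.kept_or_dead hxy with hk1 | hd1 <;> rcases D.kept_or_dead hxz with hk2 | hd2
            · obtain ⟨i, rfl⟩ := hidx x (hsurv_kept hk1)
              obtain ⟨j, rfl⟩ := hidx y (hsurv_kept (D.kept_symm hk1))
              obtain ⟨l, rfl⟩ := hidx z (hsurv_kept (D.kept_symm hk2))
              refine Or.inl ⟨i, j, l, hk1, hk2, fun hh => hyz (congrArg F hh), Or.inl ⟨?_, ?_⟩⟩
              · simp only [hni]; rw [if_pos hk1]; exact hu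
              · simp only [hni]; rw [if_pos hk2]; exact hv
            · -- xz dead, alive at x
              have htg2 : D.targetE x z = x := D.targetE_of_alive ⟨v', hv⟩
              have hm2 : v' ∈ D.DEx x := ⟨x, z, hd2, htg2, D.mem_ηe_of_ηi hv⟩
              obtain ⟨i, rfl⟩ := hidx x (hsurv_kept hk1)
              obtain ⟨j, rfl⟩ := hidx y (hsurv_kept (D.kept_symm hk1))
              refine Or.inr (Or.inl ⟨i, j, hk1, Or.inl ⟨?_, Or.inl (Or.inr hm2)⟩⟩)
              simp only [hni]; rw [if_pos hk1]; exact hu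
            · have htg1 : D.targetE x y = x := D.targetE_of_alive ⟨u', hu⟩
              have hm1 : u' ∈ D.DEx x := ⟨x, y, hd1, htg1, D.mem_ηe_of_ηi hu⟩
              obtain ⟨i, rfl⟩ := hidx x (hsurv_kept hk2)
              obtain ⟨l, rfl⟩ := hidx z (hsurv_kept (D.kept_symm hk2))
              refine Or.inr (Or.inl ⟨i, l, hk2, Or.inr ⟨?_, Or.inl (Or.inr hm1)⟩⟩)
              simp only [hni]; rw [if_pos hk2]; exact hv
            · have htg1 : D.targetE x y = x := D.targetE_of_alive ⟨u', hu⟩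
              have htg2 : D.targetE x z = x := D.targetE_of_alive ⟨v', hv⟩
              have hm1 : u' ∈ D.DEx x := ⟨x, y, hd1, htg1, D.mem_ηe_of_ηi hu⟩
              have hm2 : v' ∈ D.DEx x := ⟨x, z, hd2, htg2, D.mem_ηe_of_ηi hv⟩
              obtain ⟨i, rfl⟩ := hidx x (hsurv_v (Or.inl (Or.inr hm1)))
              exact Or.inr (Or.inr ⟨i, Or.inl (Or.inr hm1), Or.inl (Or.inr hm2)⟩)
          rcases hc with ⟨hu, hv⟩ | ⟨hv, hu⟩
          · rcases main u v huv hu hv with ⟨i, j, l, a1, a2, a3, hor⟩ | ⟨i, j, a1, hor⟩ | ⟨i, h1, h2⟩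
            · exact Or.inr (Or.inr (Or.inr (Or.inl ⟨i, j, l, a1, a2, a3, hor⟩)))
            · exact Or.inr (Or.inr (Or.inr (Or.inr (Or.inl ⟨i, j, a1, hor⟩))))
            · exact Or.inl ⟨i, h1, h2⟩
          · rcases main v u huv.symm hv hu with ⟨i, j, l, a1, a2, a3, hor⟩ | ⟨i, j, a1, hor⟩ | ⟨i, h1, h2⟩
            · exact Or.inr (Or.inr (Or.inr (Or.inl ⟨i, j, l, a1, a2, a3, hor.symm⟩)))
            · exact Or.inr (Or.inr (Or.inr (Or.inr (Or.inl ⟨i, j, a1, hor.symm⟩))))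
            · exact Or.inl ⟨i, h2, h1⟩
        · -- interface to vertex set
          have main : ∀ u' v' : V, u' ∈ D.ηi x y → v' ∈ D.ηv x →
              (∃ i j, H₂.Adj i j ∧ ((u' ∈ ni i j ∧ v' ∈ nv i) ∨ (v' ∈ ni i j ∧ u' ∈ nv i))) ∨
              (∃ i, u' ∈ nv i ∧ v' ∈ nv i) := by
            intro u' v' hu hv
            rcases D.kept_or_dead hxy with hk1 | hd1
            · obtain ⟨i, rfl⟩ := hidx x (hsurv_kept hk1)
              obtain ⟨j, rfl⟩ := hidx y (hsurv_kept (D.kept_symm hk1))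
              refine Or.inl ⟨i, j, hk1, Or.inl ⟨?_, Or.inl (Or.inl hv)⟩⟩
              simp only [hni]; rw [if_pos hk1]; exact hu
            · have htg1 : D.targetE x y = x := D.targetE_of_alive ⟨u', hu⟩
              have hm1 : u' ∈ D.DEx x := ⟨x, y, hd1, htg1, D.mem_ηe_of_ηi hu⟩
              obtain ⟨i, rfl⟩ := hidx x (hsurv_v (Or.inl (Or.inr hm1)))
              exact Or.inr ⟨i, Or.inl (Or.inr hm1), Or.inl (Or.inl hv)⟩
          rcases hc with ⟨hu, hv⟩ | ⟨hv, hu⟩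
          · rcases main u v hu hv with ⟨i, j, a1, hor⟩ | ⟨i, h1, h2⟩
            · exact Or.inr (Or.inr (Or.inr (Or.inr (Or.inl ⟨i, j, a1, hor⟩))))
            · exact Or.inl ⟨i, h1, h2⟩
          · rcases main v u hv hu with ⟨i, j, a1, hor⟩ | ⟨i, h1, h2⟩
            · exact Or.inr (Or.inr (Or.inr (Or.inr (Or.inl ⟨i, j, a1, hor.symm⟩))))
            · exact Or.inl ⟨i, h2, h1⟩
        · -- triangle set to core
          have main : ∀ u' v' : V, u' ∈ D.ηt x y z → v' ∈ D.ηi x y ∩ D.ηi y x →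
              (∃ i j l, Tri H₂ i j l ∧
                ((u' ∈ nt i j l ∧ v' ∈ ni i j ∩ ni j i) ∨
                 (v' ∈ nt i j l ∧ u' ∈ ni i j ∩ ni j i))) ∨
              (∃ i j, H₂.Adj i j ∧ ((u' ∈ ni i j ∧ v' ∈ nv i) ∨ (v' ∈ ni i j ∧ u' ∈ nv i))) := by
            intro u' v' hu hv
            have hk1 : D.kept x y := by
              rcases D.kept_or_dead htri.1 with hk | hd
              · exact hk
              · exfalso
                have := D.dead_core hd
                rw [Set.eq_empty_iff_forall_notMem] at this
                exact this v' hv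
            by_cases hkt : D.keptTri x y z
            · obtain ⟨i, rfl⟩ := hidx x (hsurv_kept hkt.1)
              obtain ⟨j, rfl⟩ := hidx y (hsurv_kept hkt.2.1)
              obtain ⟨l, rfl⟩ := hidx z (hsurv_kept (D.kept_symm hkt.2.2))
              refine Or.inl ⟨i, j, l, (hTri i j l).mpr hkt, Or.inl ⟨?_, ?_, ?_⟩⟩
              · simp only [hnt]; rw [if_pos hkt]; exact hu
              · simp only [hni]; rw [if_pos hk1]; exact hv.1
              · simp only [hni]; rw [if_pos (D.kept_symm hk1)]; exact hv.2
            · obtain ⟨t, ht⟩ := D.assignedT_exists htri hkt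
              have hm1 : u' ∈ D.DTx t := ⟨x, y, z, ht, hu⟩
              rcases D.assignedT_of_kept12 ht hk1 with htx | hty
              · obtain ⟨i, hFi⟩ := hidx x (hsurv_kept hk1)
                obtain ⟨j, hFj⟩ := hidx y (hsurv_kept (D.kept_symm hk1))
                have hkF : D.kept (F i) (F j) := by rw [hFi, hFj]; exact hk1
                refine Or.inr ⟨i, j, hkF, Or.inr ⟨?_, Or.inr ?_⟩⟩
                · simp only [hni]
                  rw [if_pos hkF, hFi, hFj]
                  exact hv.1
                · show u' ∈ D.DTx (F i)
                  rw [hFi, ← htx]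
                  exact hm1
              · obtain ⟨i, hFi⟩ := hidx x (hsurv_kept hk1)
                obtain ⟨j, hFj⟩ := hidx y (hsurv_kept (D.kept_symm hk1))
                have hkF : D.kept (F j) (F i) := by rw [hFi, hFj]; exact D.kept_symm hk1
                refine Or.inr ⟨j, i, hkF, Or.inr ⟨?_, Or.inr ?_⟩⟩
                · simp only [hni]
                  rw [if_pos hkF, hFi, hFj]
                  exact hv.2
                · show u' ∈ D.DTx (F j)
                  rw [hFj, ← hty]
                  exact hm1
          rcases hc with ⟨hu, hv⟩ | ⟨hv, hu⟩
          · rcases main u v hu hv with ⟨i, j, l, a1, hor⟩ | ⟨i, j, a1, hor⟩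
            · exact Or.inr (Or.inr (Or.inr (Or.inr (Or.inr ⟨i, j, l, a1, hor⟩))))
            · exact Or.inr (Or.inr (Or.inr (Or.inr (Or.inl ⟨i, j, a1, hor⟩))))
          · rcases main v u hv hu with ⟨i, j, l, a1, hor⟩ | ⟨i, j, a1, hor⟩
            · exact Or.inr (Or.inr (Or.inr (Or.inr (Or.inr ⟨i, j, l, a1, hor.symm⟩))))
            · exact Or.inr (Or.inr (Or.inr (Or.inr (Or.inl ⟨i, j, a1, hor.symm⟩)))) } with hD'
  refine ⟨Fin k, H₂, D', ?_, ?_⟩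
  · constructor
    · intro i j hadj
      have : (D.ηi (F i) (F j)).Nonempty := hadj.2.1
      simp only [hD', hni]
      rw [if_pos hadj]
      exact this
    · intro i hiso
      rcases hFsurv i with ⟨y, hky⟩ | hne
      · exfalso
        obtain ⟨j, hFj⟩ := hidx y (hsurv_kept (D.kept_symm hky))
        apply hiso j
        show D.kept (F i) (F j)
        rw [hFj]
        exact hky
      · exact hne
  · refine ⟨?_, ?_, ?_, ?_, ?_⟩
    · intro i
      exact hC1 (F i)
    · intro i j hadj
      simp only [hD', hne', hni]
      rw [if_pos hadj, if_pos hadj, if_pos (D.kept_symm hadj)]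
      exact hD.2.1 (F i) (F j) hadj.1
    · intro i j hadj
      refine le_trans (wsum_mono w ?_) (hC2 (F i) (F j) hadj)
      intro v hv
      rcases hv with hv | hv
      · exact Or.inr (Or.inl hv)
      · simp only [hD', hne'] at hv
        rw [if_pos hadj] at hv
        exact Or.inl (D.mem_fullEdge_e hv.1)
    · intro i j hadj
      refine le_trans (wsum_mono w ?_) (hC2 (F i) (F j) hadj)
      intro v hv
      rcases hv with ((hv | hv) | hv) | ⟨r, hv⟩
      · exact Or.inr (Or.inl hv)
      · exact Or.inr (Or.inr hv)
      · simp only [hD', hne'] at hv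
        rw [if_pos hadj] at hv
        exact Or.inl (D.mem_fullEdge_e hv)
      · simp only [hD', hnt] at hv
        by_cases hkt : D.keptTri (F i) (F j) (F r)
        · rw [if_pos hkt] at hv
          exact Or.inl (D.mem_fullEdge_t hv)
        · rw [if_neg hkt] at hv
          exact absurd hv (Set.notMem_empty v)
    · intro i j l htri
      have hkt := (hTri i j l).mp htri
      simp only [hD', hnt]
      rw [if_pos hkt]
      exact hD.2.2.2.2 (F i) (F j) (F l) ⟨hkt.1.1, hkt.2.1.1, hkt.2.2.1⟩

end ESD

/-- from an extended strip decomposition with all particles of weight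
at most `b ≥ W/2`, either obtain a rigid one with the same bound, or a set of at
most two vertices whose closed neighborhood's removal leaves components of weight
at most `b`. -/
theorem make_rigid {V : Type*} {H' : Type*} [Fintype V]
    (G : SimpleGraph V) (w : V → ℕ) (b : ℕ) (hb : wsum w Set.univ ≤ 2 * b)
    (H : SimpleGraph H') (D : ESD G H) (hD : D.ParticlesSmall w b) :
    (∃ (H₂' : Type) (H₂ : SimpleGraph H₂') (D' : ESD G H₂),
      D'.IsRigid ∧ D'.ParticlesSmall w b) ∨
    (∃ X : Finset V, X.card ≤ 2 ∧
      CompsSmall G w (Set.univ \ closedNbhd G (↑X : Set V)) b) := by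
  classical
  by_cases hC1 : ∀ t, wsum w (D.vstar t) ≤ b
  · by_cases hC2 : ∀ z w', D.kept z w' →
      wsum w (D.fullEdge z w' ∪ (D.vstar z ∪ D.vstar w')) ≤ b
    · exact Or.inl (D.caseII w b hC1 hC2 hD)
    · push_neg at hC2
      obtain ⟨z, w', hk, hlt⟩ := hC2
      exact Or.inr (D.caseI_keptEdge w b z w' hk hlt hb hD)
  · push_neg at hC1
    obtain ⟨x, hlt⟩ := hC1
    exact Or.inr (D.caseI_vertex w b x hlt hb hD)
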